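/- arXiv:2108.10384 — 4 statements merged into one kernel-verified Lean document; each statement's English description precedes it below -/
import Mathlib

section
/- Let G be a finite abelian 2-group and let c ∈ G be an element of order 2. Then there exist an element y ∈ G and a subgroup A of G such that G is the internal direct product of ⟨y⟩ and A (that is, ⟨y⟩ ∩ A = {1} and every element of G is uniquely a product of an element of ⟨y⟩ and an element of A) and c ∈ ⟨y⟩. -/
open Subgroup

private lemma cdf_complement_of_inf_sup {G : Type*} [CommGroup G] {H K : Subgroup G}
    (h1 : H ⊓ K = ⊥) (h2 : H ⊔ K = ⊤) :
    ∀ g : G, ∃! p : H × K, (p.1 : G) * (p.2 : G) = g := by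
  have hc : IsComplement' H K := by
    apply isComplement'_of_disjoint_and_mul_eq_univ (disjoint_iff.2 h1)
    rw [← Subgroup.mul_normal H K] at *
    rw [h2]; rfl
  exact fun g => hc.existsUnique g

private lemma cdf_unique_involution {G : Type*} [CommGroup G] (g w : G) (j : ℕ) (hj : 1 ≤ j)
    (ho : orderOf g = 2 ^ j) (hw : w ∈ zpowers g) (hw2 : w ^ 2 = 1) (hw1 : w ≠ 1) :
    w = g ^ (2 ^ (j - 1)) := by
  obtain ⟨m, rfl⟩ := hw
  simp only at hw2 hw1 ⊢
  have h1 : ((2:ℤ) ^ j) ∣ m * 2 := by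
    have h2 : g ^ (m * 2) = 1 := by
      rw [zpow_mul]
      exact_mod_cast hw2
    have := (orderOf_dvd_iff_zpow_eq_one).2 h2
    rw [ho] at this
    exact_mod_cast this
  have h3 : ((2:ℤ) ^ (j - 1)) ∣ m := by
    have h4 : ((2:ℤ) ^ (j-1)) * 2 ∣ m * 2 := by
      rw [← pow_succ]
      have : j - 1 + 1 = j := by omega
      rwa [this]
    exact (mul_dvd_mul_iff_right (by norm_num : (2:ℤ) ≠ 0)).1 h4
  obtain ⟨q, rfl⟩ := h3
  set h : G := g ^ ((2:ℕ) ^ (j - 1)) with hh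
  have hgz : g ^ ((2:ℤ) ^ (j-1)) = h := by
    rw [hh, ← zpow_natCast]; norm_cast
  have hsq : h ^ 2 = 1 := by
    rw [hh, ← pow_mul, ← pow_succ]
    have : j - 1 + 1 = j := by omega
    rw [this, ← ho, pow_orderOf_eq_one]
  have hwq : g ^ (2 ^ (j-1) * q) = h ^ q := by
    rw [zpow_mul, hgz]
  rw [hwq] at hw1 ⊢
  have hq : q % 2 = 0 ∨ q % 2 = 1 := Int.emod_two_eq q
  have hdecomp : h ^ q = h ^ (q % 2) := by
    conv_lhs => rw [← Int.mul_ediv_add_emod q 2, zpow_add, mul_comm, zpow_mul]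
    norm_num
    rw [hsq, one_zpow]
    try rw [one_mul]
  rcases hq with h0 | h0
  · rw [hdecomp, h0] at hw1; simp at hw1
  · rw [hdecomp, h0, zpow_one]

private lemma cdf_lemma1 {G : Type*} [CommGroup G] [Finite G]
    (hG : ∃ n : ℕ, Nat.card G = 2 ^ n)
    (y : G) (hy : orderOf y = Monoid.exponent G) :
    ∃ A : Subgroup G, zpowers y ⊓ A = ⊥ ∧ zpowers y ⊔ A = ⊤ := by
  obtain ⟨n, hn⟩ := hG
  obtain ⟨A, hA, hmax⟩ := Set.Finite.exists_maximalFor id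
    {A : Subgroup G | zpowers y ⊓ A = ⊥} (Set.toFinite _) ⟨⊥, by simp⟩
  simp only [Set.mem_setOf_eq] at hA
  refine ⟨A, hA, ?_⟩
  by_contra hM
  set M := zpowers y ⊔ A with hMdef
  obtain ⟨g, hg⟩ : ∃ g : G, g ∉ M := by
    by_contra h; push_neg at h
    exact hM (top_unique fun x _ => h x)
  obtain ⟨k, hk_le, hk⟩ := (Nat.dvd_prime_pow Nat.prime_two).1
    (hn ▸ Group.exponent_dvd_nat_card (G := G))
  have hk1 : 1 ≤ k := by
    rcases Nat.eq_zero_or_pos k with h0 | h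
    · exfalso
      rw [h0, pow_zero] at hk
      have hg1 := Monoid.pow_exponent_eq_one g
      rw [hk, pow_one] at hg1
      exact hg (hg1 ▸ one_mem M)
    · exact h
  set Q := G ⧸ M with hQ
  set gbar : Q := QuotientGroup.mk g with hgbar
  have hgbar1 : gbar ≠ 1 := by
    rw [hgbar, Ne, QuotientGroup.eq_one_iff]; exact hg
  have hdvd : orderOf gbar ∣ 2 ^ n := by
    refine dvd_trans (orderOf_dvd_natCard gbar) ?_
    rw [← hn, card_eq_card_quotient_mul_card_subgroup M]
    exact Dvd.intro _ rfl
  obtain ⟨r, hr_le, hr⟩ := (Nat.dvd_prime_pow Nat.prime_two).1 hdvd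
  have hr1 : 1 ≤ r := by
    rcases Nat.eq_zero_or_pos r with h0 | h
    · rw [h0, pow_zero] at hr
      exact absurd (orderOf_eq_one_iff.1 hr) hgbar1
    · exact h
  set x : G := g ^ ((2:ℕ) ^ (r - 1)) with hx
  have hxM : x ∉ M := by
    intro hmem
    have h1 : gbar ^ ((2:ℕ) ^ (r-1)) = 1 := by
      rw [hgbar, ← QuotientGroup.mk_pow, QuotientGroup.eq_one_iff]
      exact hmem
    have hd := orderOf_dvd_of_pow_eq_one h1
    rw [hr] at hd
    have := (Nat.pow_dvd_pow_iff_le_right (show 1 < 2 by norm_num)).1 hd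
    omega
  have hx2M : x ^ 2 ∈ M := by
    have h2 : (gbar ^ (2:ℕ)^(r-1)) ^ 2 = 1 := by
      rw [← pow_mul, ← pow_succ]
      have hre : r - 1 + 1 = r := by omega
      rw [hre, ← hr, pow_orderOf_eq_one]
    rw [← QuotientGroup.eq_one_iff, QuotientGroup.mk_pow, QuotientGroup.mk_pow]
    exact h2
  obtain ⟨h', hh', a, haA, hprod⟩ := Subgroup.mem_sup.1 hx2M
  obtain ⟨s, rfl⟩ := hh'
  simp only at hprod
  have hs_even : (2:ℤ) ∣ s := by
    have hxe : (x ^ 2) ^ ((2:ℕ) ^ (k-1)) = 1 := by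
      rw [← pow_mul]
      have h2k : 2 * 2^(k-1) = 2^k := by
        rw [← pow_succ']
        congr 1
        omega
      rw [h2k, ← hk]
      exact Monoid.pow_exponent_eq_one x
    rw [← hprod, mul_pow, ← zpow_natCast (y ^ s) (2^(k-1)), ← zpow_mul] at hxe
    push_cast at hxe
    have huA : y ^ (s * (2:ℤ)^(k-1)) ∈ A := by
      have he : y ^ (s * (2:ℤ)^(k-1)) = (a ^ (2:ℕ)^(k-1))⁻¹ := by
        rwa [mul_eq_one_iff_eq_inv] at hxe
      rw [he]
      exact inv_mem (pow_mem haA _)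
    have hu1 : y ^ (s * (2:ℤ)^(k-1)) = 1 := by
      have hmem : y ^ (s * (2:ℤ)^(k-1)) ∈ zpowers y ⊓ A :=
        Subgroup.mem_inf.2 ⟨zpow_mem (mem_zpowers y) _, huA⟩
      rw [hA] at hmem
      exact Subgroup.mem_bot.1 hmem
    have hdv : ((2:ℤ)^k) ∣ s * (2:ℤ)^(k-1) := by
      have hd2 := orderOf_dvd_iff_zpow_eq_one.2 hu1
      rw [hy, hk] at hd2
      exact_mod_cast hd2
    have hdv2 : (2:ℤ) * (2:ℤ)^(k-1) ∣ s * (2:ℤ)^(k-1) := by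
      rw [← pow_succ']
      have : k - 1 + 1 = k := by omega
      rwa [this]
    exact (mul_dvd_mul_iff_right (pow_ne_zero _ (two_ne_zero))).1 hdv2
  obtain ⟨t, hts⟩ := hs_even
  set x' : G := x * y ^ (-t : ℤ) with hx'def
  have hx'2 : x' ^ 2 = a := by
    rw [hx'def, mul_pow, ← hprod, ← zpow_natCast (y ^ (-t:ℤ)) 2, ← zpow_mul,
      mul_right_comm, ← zpow_add]
    push_cast
    rw [show s + -t * 2 = 0 by omega, zpow_zero, one_mul]
  have hyM : ∀ i : ℤ, y ^ i ∈ M := fun i => mem_sup_left (zpow_mem (mem_zpowers y) i)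
  have hx'M : x' ∉ M := by
    intro h
    apply hxM
    have hxx : x = x' * y ^ (t:ℤ) := by
      rw [hx'def, mul_assoc, ← zpow_add]
      norm_num
    rw [hxx]
    exact mul_mem h (hyM t)
  have hx'z : x' ^ (2:ℤ) = a := by
    rw [show (2:ℤ) = ((2:ℕ):ℤ) from rfl, zpow_natCast, hx'2]
  have hA' : zpowers y ⊓ (A ⊔ zpowers x') = ⊥ := by
    rw [eq_bot_iff]
    intro w hw
    obtain ⟨hw1, hw2⟩ := Subgroup.mem_inf.1 hw
    obtain ⟨a', ha', v, hv, hav⟩ := Subgroup.mem_sup.1 hw2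
    obtain ⟨m, rfl⟩ := hv
    simp only at hav
    have hdec : x' ^ m = a ^ (m / 2) * x' ^ (m % 2) := by
      rw [← hx'z, ← zpow_mul, ← zpow_add, Int.mul_ediv_add_emod]
    rcases Int.emod_two_eq m with h0 | h0
    · rw [hdec, h0, zpow_zero, mul_one] at hav
      have hwA : w ∈ A := hav ▸ mul_mem ha' (zpow_mem haA _)
      have : w ∈ zpowers y ⊓ A := Subgroup.mem_inf.2 ⟨hw1, hwA⟩
      rw [hA] at this
      exact this
    · exfalso
      apply hx'M
      rw [hdec, h0, zpow_one, ← mul_assoc] at hav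
      have hx'eq : x' = (a' * a ^ (m / 2))⁻¹ * w := by
        rw [← hav]; group
      rw [hx'eq]
      exact mul_mem (inv_mem (mul_mem (mem_sup_right ha')
        (mem_sup_right (zpow_mem haA _)))) (mem_sup_left hw1)
  have hAA' : A = A ⊔ zpowers x' := le_antisymm le_sup_left (hmax hA' le_sup_left)
  exact hx'M (mem_sup_right (hAA' ▸ mem_sup_right (mem_zpowers x')))

private lemma cdf_lemmaE {G : Type*} [CommGroup G] (y0 z : G) (A0 B' : Subgroup G)
    (hzA : z ∈ A0) (hB'A : B' ≤ A0)
    (h1 : zpowers y0 ⊓ A0 = ⊥)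
    (h3 : zpowers z ⊓ B' = ⊥) (h4 : zpowers z ⊔ B' = A0)
    (e : ℤ) (he : y0 ^ ((orderOf z : ℤ) * e) = 1) :
    zpowers (z * y0 ^ e) ⊓ (zpowers y0 ⊔ B') = ⊥ ∧
      zpowers (z * y0 ^ e) ⊔ (zpowers y0 ⊔ B') = zpowers y0 ⊔ A0 := by
  constructor
  · rw [eq_bot_iff]
    intro w hw
    obtain ⟨hw1, hw2⟩ := Subgroup.mem_inf.1 hw
    obtain ⟨m, rfl⟩ := hw1
    obtain ⟨v, hv, b, hb, hvb⟩ := Subgroup.mem_sup.1 hw2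
    obtain ⟨i, rfl⟩ := hv
    simp only at hvb ⊢
    have hsplit : (z * y0 ^ e) ^ m = z ^ m * y0 ^ (e * m) := by
      rw [mul_zpow, ← zpow_mul]
    rw [hsplit] at hvb
    have hy0A : y0 ^ (i - e * m) = z ^ m * b⁻¹ := by
      have hh : y0 ^ i = z ^ m * y0 ^ (e * m) * b⁻¹ := by
        rw [← hvb, mul_inv_cancel_right]
      rw [zpow_sub]
      try rw [div_eq_mul_inv]
      rw [hh, mul_right_comm, mul_inv_cancel_right]
    have hy0bot : y0 ^ (i - e * m) = 1 := by
      have hmem : y0 ^ (i - e * m) ∈ zpowers y0 ⊓ A0 := by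
        refine Subgroup.mem_inf.2 ⟨zpow_mem (mem_zpowers y0) _, ?_⟩
        rw [hy0A]
        exact mul_mem (zpow_mem hzA m) (inv_mem (hB'A hb))
      rw [h1] at hmem
      exact Subgroup.mem_bot.1 hmem
    have hzb : z ^ m = b := by
      have := hy0A.symm.trans hy0bot
      rw [mul_inv_eq_one] at this
      exact this
    have hzbot : z ^ m = 1 := by
      have hmem : z ^ m ∈ zpowers z ⊓ B' :=
        Subgroup.mem_inf.2 ⟨zpow_mem (mem_zpowers z) _, hzb ▸ hb⟩
      rw [h3] at hmem
      exact Subgroup.mem_bot.1 hmem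
    have hdvd : (orderOf z : ℤ) ∣ m := orderOf_dvd_iff_zpow_eq_one.2 hzbot
    obtain ⟨q, hq⟩ := hdvd
    have hy0em : y0 ^ (e * m) = 1 := by
      rw [hq, show e * ((orderOf z : ℤ) * q) = ((orderOf z : ℤ) * e) * q by ring,
        zpow_mul, he, one_zpow]
    rw [hsplit, hzbot, hy0em, one_mul]
    exact Subgroup.mem_bot.2 rfl
  · apply le_antisymm
    · refine sup_le ?_ (sup_le le_sup_left (hB'A.trans le_sup_right))
      rw [zpowers_le]
      exact mul_mem (mem_sup_right hzA) (mem_sup_left (zpow_mem (mem_zpowers y0) e))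
    · refine sup_le (le_sup_left.trans le_sup_right) ?_
      rw [← h4]
      refine sup_le ?_ (le_sup_right.trans le_sup_right)
      rw [zpowers_le]
      have hz : z = (z * y0 ^ e) * (y0 ^ e)⁻¹ := by group
      have hmem : (z * y0 ^ e) * (y0 ^ e)⁻¹ ∈ zpowers (z * y0 ^ e) ⊔ (zpowers y0 ⊔ B') :=
        mul_mem (mem_sup_left (mem_zpowers _))
          (mem_sup_right (mem_sup_left (inv_mem (zpow_mem (mem_zpowers y0) e))))
      rwa [← hz] at hmem

private lemma cdf_main : ∀ (n : ℕ) (G : Type u) [CommGroup G] [Finite G],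
    Nat.card G ≤ n → (∃ m : ℕ, Nat.card G = 2 ^ m) → ∀ c : G, orderOf c = 2 →
    ∃ (y : G) (A : Subgroup G),
      c ∈ zpowers y ∧ zpowers y ⊓ A = ⊥ ∧ zpowers y ⊔ A = ⊤ := by
  intro n
  induction n with
  | zero =>
    intro G _ _ hcard _ c _
    have := Nat.card_pos (α := G)
    omega
  | succ n ih =>
    intro G _ _ hcard hG c hc
    obtain ⟨nG, hnG⟩ := hG
    -- exponent is 2^k, k ≥ 1
    obtain ⟨k, hk_le, hk⟩ := (Nat.dvd_prime_pow Nat.prime_two).1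
      (hnG ▸ Group.exponent_dvd_nat_card (G := G))
    have hk1 : 1 ≤ k := by
      by_contra h
      have h0 : k = 0 := by omega
      rw [h0, pow_zero] at hk
      have := Monoid.order_dvd_exponent c
      rw [hc, hk] at this
      omega
    -- element of maximal order
    obtain ⟨y0, hy0⟩ := Monoid.exists_orderOf_eq_exponent (Monoid.ExponentExists.of_finite (G := G))
    have hy0k : orderOf y0 = 2 ^ k := hy0.trans hk
    obtain ⟨A0, hA0, hA0top⟩ := cdf_lemma1 ⟨nG, hnG⟩ y0 hy0
    -- decompose c
    have hcmem : c ∈ zpowers y0 ⊔ A0 := hA0top ▸ mem_top c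
    obtain ⟨u, hu, a, haA0, huac⟩ := Subgroup.mem_sup.1 hcmem
    have hc2 : c ^ 2 = 1 := by rw [← hc, pow_orderOf_eq_one]
    have hu2a2 : u ^ 2 * a ^ 2 = 1 := by rw [← mul_pow, huac, hc2]
    have hu2 : u ^ 2 = 1 ∧ a ^ 2 = 1 := by
      have hmem : u ^ 2 ∈ zpowers y0 ⊓ A0 := by
        refine Subgroup.mem_inf.2 ⟨pow_mem hu 2, ?_⟩
        have : u ^ 2 = (a ^ 2)⁻¹ := by rwa [mul_eq_one_iff_eq_inv] at hu2a2
        rw [this]; exact inv_mem (pow_mem haA0 2)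
      rw [hA0] at hmem
      have hu1 : u ^ 2 = 1 := Subgroup.mem_bot.1 hmem
      refine ⟨hu1, ?_⟩
      rw [hu1, one_mul] at hu2a2
      exact hu2a2
    by_cases ha1 : a = 1
    · refine ⟨y0, A0, ?_, hA0, hA0top⟩
      rw [← huac, ha1, mul_one]
      exact hu
    -- a ≠ 1 : recurse into A0
    · haveI : Fact (Nat.Prime 2) := ⟨Nat.prime_two⟩
      set abar : A0 := ⟨a, haA0⟩ with habar
      have habar2 : orderOf abar = 2 := by
        refine orderOf_eq_prime ?_ ?_
        · ext; push_cast [habar]; exact hu2.2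
        · intro h; apply ha1
          have := congrArg (Subtype.val) h
          simpa [habar] using this
      -- cardinality bookkeeping
      have hcardmul : Nat.card (zpowers y0) * Nat.card A0 = Nat.card G := by
        have hbij : Function.Bijective
            (fun p : (zpowers y0) × A0 => ((p.1 : G) * (p.2 : G))) :=
          Function.bijective_iff_existsUnique _ |>.2
            (cdf_complement_of_inf_sup hA0 hA0top)
        rw [← Nat.card_prod]
        exact Nat.card_eq_of_bijective _ hbij
    
      have hzy0card : Nat.card (zpowers y0) = 2 ^ k := by
        rw [Nat.card_zpowers, hy0k]
      have hA0pos : 0 < Nat.card A0 := Nat.card_pos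
      have hA0lt : Nat.card A0 ≤ n := by
        have h2k : 2 ≤ 2 ^ k := by
          calc 2 = 2 ^ 1 := (pow_one 2).symm
          _ ≤ 2 ^ k := Nat.pow_le_pow_right (by norm_num) hk1
        have : 2 * Nat.card A0 ≤ 2 ^ k * Nat.card A0 :=
          Nat.mul_le_mul_right _ h2k
        rw [hzy0card] at hcardmul
        omega
      have hA0card2 : ∃ m : ℕ, Nat.card A0 = 2 ^ m := by
        have hdvd : Nat.card A0 ∣ Nat.card G := Subgroup.card_subgroup_dvd_card A0
        rw [hnG] at hdvd
        obtain ⟨m, -, hm⟩ := (Nat.dvd_prime_pow Nat.prime_two).1 hdvd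
        exact ⟨m, hm⟩
      obtain ⟨z', B, hcz', hzB, hzBtop⟩ := ih A0 hA0lt hA0card2 abar habar2
      set z : G := (z' : G) with hz
      set B' : Subgroup G := B.map A0.subtype with hB'
      have hzA0 : z ∈ A0 := z'.2
      have hB'A0 : B' ≤ A0 := Subgroup.map_subtype_le B
      have h3 : zpowers z ⊓ B' = ⊥ := by
        have hmi := Subgroup.map_inf (zpowers z') B A0.subtype (subtype_injective A0)
        rw [hzB, Subgroup.map_bot, MonoidHom.map_zpowers] at hmi
        exact hmi.symm
      have h4 : zpowers z ⊔ B' = A0 := by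
        have hms : (⊤ : Subgroup A0).map A0.subtype
            = (zpowers z').map A0.subtype ⊔ B.map A0.subtype := by
          rw [← Subgroup.map_sup, hzBtop]
        rw [MonoidHom.map_zpowers, ← MonoidHom.range_eq_map, A0.range_subtype] at hms
        exact hms.symm
      have hca : a ∈ zpowers z := by
        obtain ⟨mm, hmm⟩ := hcz'
        exact ⟨mm, by
          have := congrArg (Subtype.val) hmm
          simpa [hz] using this⟩
      by_cases hu1 : u = 1
      · obtain ⟨hi, hs⟩ := cdf_lemmaE y0 z A0 B' hzA0 hB'A0 hA0 h3 h4 0 (by simp)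
        rw [zpow_zero, mul_one] at hi hs
        refine ⟨z, zpowers y0 ⊔ B', ?_, hi, by rw [hs, hA0top]⟩
        rw [← huac, hu1, one_mul]
        exact hca
      · -- u = y0 ^ 2^(k-1), a = z ^ 2^(j-1)
        have hueq : u = y0 ^ ((2:ℕ) ^ (k - 1)) :=
          cdf_unique_involution y0 u k hk1 hy0k hu hu2.1 hu1
        obtain ⟨j, hj_le, hj⟩ := (Nat.dvd_prime_pow Nat.prime_two).1
          (hk ▸ Monoid.order_dvd_exponent z)
        have hj1 : 1 ≤ j := by
          by_contra h
          have h0 : j = 0 := by omega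
          rw [h0, pow_zero] at hj
          have hz1 : z = 1 := orderOf_eq_one_iff.1 hj
          obtain ⟨mm, hmm⟩ := hca
          apply ha1
          rw [← hmm]
          simp [hz1]
        have haeq : a = z ^ ((2:ℕ) ^ (j - 1)) :=
          cdf_unique_involution z a j hj1 hj hca hu2.2 ha1
        set e : ℤ := ((2:ℕ) ^ (k - j) : ℤ) with he_def
        have he : y0 ^ ((orderOf z : ℤ) * e) = 1 := by
          rw [hj, he_def]
          have : ((2 ^ j : ℕ) : ℤ) * ((2:ℕ) ^ (k - j) : ℤ) = ((2 ^ k : ℕ) : ℤ) := by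
            push_cast
            rw [← pow_add]
            congr 1
            omega
          rw [this, zpow_natCast, ← hy0k, pow_orderOf_eq_one]
        obtain ⟨hi, hs⟩ := cdf_lemmaE y0 z A0 B' hzA0 hB'A0 hA0 h3 h4 e he
        refine ⟨z * y0 ^ e, zpowers y0 ⊔ B', ?_, hi, by rw [hs, hA0top]⟩
        refine ⟨((2:ℕ) ^ (j - 1) : ℤ), ?_⟩
        simp only
        rw [mul_zpow, ← zpow_mul]
        have hexp : e * ((2:ℕ) ^ (j - 1) : ℤ) = ((2:ℕ) ^ (k - 1) : ℤ) := by
          rw [he_def]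
          push_cast
          rw [← pow_add]
          congr 1
          omega
        rw [hexp]
        push_cast
        have hzc : z ^ ((2:ℤ) ^ (j - 1)) = z ^ ((2:ℕ) ^ (j - 1)) := by
          rw [← zpow_natCast]; norm_cast
        have hyc : y0 ^ ((2:ℤ) ^ (k - 1)) = y0 ^ ((2:ℕ) ^ (k - 1)) := by
          rw [← zpow_natCast]; norm_cast
        rw [hzc, hyc, ← haeq, ← hueq, mul_comm, huac]


/-- Lemma: in a finite abelian 2-group `G`, any element `c` of order 2 lies in
a cyclic direct factor: there are `y ∈ G` and a subgroup `A ≤ G` with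
`⟨y⟩ ∩ A = 1`, every element of `G` uniquely a product of an element of `⟨y⟩`
and an element of `A`, and `c ∈ ⟨y⟩`. -/
theorem exists_cyclic_direct_factor_containing_involution
    (G : Type*) [CommGroup G] [Finite G] (hG : ∃ n : ℕ, Nat.card G = 2 ^ n)
    (c : G) (hc : orderOf c = 2) :
    ∃ (y : G) (A : Subgroup G),
      c ∈ Subgroup.zpowers y ∧
      Subgroup.zpowers y ⊓ A = ⊥ ∧
      ∀ g : G, ∃! p : Subgroup.zpowers y × A, (p.1 : G) * (p.2 : G) = g := by
  obtain ⟨y, A, h1, h2, h3⟩ := cdf_main (Nat.card G) G le_rfl hG c hc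
  exact ⟨y, A, h1, h2, cdf_complement_of_inf_sup h2 h3⟩
end

section
/- For every r ≥ 3, the group G = Q_{2^r} × C₂ × C₂ × C₂ satisfies α(G) ≤ 2^{r+1} + 6; in particular α(G) ≤ |G| = 2^{r+3}. -/
/-- `graphAlpha G` is the minimum number of vertices of a finite simple graph whose
automorphism group is isomorphic to `G`. -/
noncomputable def graphAlpha (G : Type*) [Group G] : ℕ :=
  sInf {n : ℕ | ∃ Γ : SimpleGraph (Fin n), Nonempty ((Γ ≃g Γ) ≃* G)}

/-- The cyclic group of order `n`. -/
abbrev Cyc (n : ℕ) := Multiplicative (ZMod n)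

open QuaternionGroup

namespace QCWork

instance factNeZero (m : ℕ) [hm : Fact (2 ≤ m)] : NeZero m := ⟨by have := hm.out; omega⟩

variable (m : ℕ) [hm : Fact (2 ≤ m)]

abbrev V := (QuaternionGroup m × Bool) ⊕ (Fin 3 × ZMod 2)

def S00 (g : QuaternionGroup m) : Prop :=
  g = a 1 ∨ g = a (-1) ∨ g = xa 0 ∨ g = xa (m : ZMod (2*m))

def S11 (g : QuaternionGroup m) : Prop :=
  g = xa 0 ∨ g = xa (m : ZMod (2*m))

def Tc (g : QuaternionGroup m) : Prop :=
  g = a 0 ∨ g = xa 0 ∨ g = xa (-1)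

def adj : V m → V m → Prop
  | .inl (g, false), .inl (h, false) => S00 m (g⁻¹ * h)
  | .inl (g, true),  .inl (h, true)  => S11 m (g⁻¹ * h)
  | .inl (g, false), .inl (h, true)  => Tc m (g⁻¹ * h)
  | .inl (g, true),  .inl (h, false) => Tc m (h⁻¹ * g)
  | .inr (p, e), .inr (q, f) => (p = q ∧ e ≠ f ∧ p ≠ 1) ∨ (p ≠ q ∧ p ≠ 0 ∧ q ≠ 0)
  | _, _ => False

section facts
variable {m : ℕ} [hm : Fact (2 ≤ m)]

lemma nz (u : ℕ) (h1 : 0 < u) (h2 : u < 2*m) : ((u : ℕ) : ZMod (2*m)) ≠ 0 := by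
  haveI : NeZero (2*m) := ⟨by have := hm.out; omega⟩
  rw [Ne, ZMod.natCast_eq_zero_iff]
  exact fun hd => absurd (Nat.le_of_dvd h1 hd) (by omega)

lemma e1 : (1 : ZMod (2*m)) ≠ 0 := by
  have := nz (m := m) 1 (by omega) (by have := hm.out; omega); simpa using this

lemma e2 : (2 : ZMod (2*m)) ≠ 0 := by
  have := nz (m := m) 2 (by omega) (by have := hm.out; omega); simpa using this

lemma em : ((m : ℕ) : ZMod (2*m)) ≠ 0 :=
  nz m (by have := hm.out; omega) (by have := hm.out; omega)

lemma em1 : ((m : ℕ) : ZMod (2*m)) + 1 ≠ 0 := by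
  have := nz (m := m) (m+1) (by omega) (by have := hm.out; omega)
  push_cast at this; exact this

lemma em1' : ((m : ℕ) : ZMod (2*m)) - 1 ≠ 0 := by
  have := nz (m := m) (m-1) (by have := hm.out; omega) (by have := hm.out; omega)
  have h : ((m - 1 : ℕ) : ZMod (2*m)) = (m : ZMod (2*m)) - 1 := by
    have h1 : (1:ℕ) ≤ m := by have := hm.out; omega
    push_cast [Nat.cast_sub h1]; ring
  rw [h] at this; exact this

lemma mm0 : ((m : ℕ) : ZMod (2*m)) + (m : ZMod (2*m)) = 0 := by
  have : (((2*m : ℕ)) : ZMod (2*m)) = 0 := ZMod.natCast_self _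
  push_cast at this; linear_combination this

end facts

lemma adj_symm : ∀ v w : V m, adj m v w → adj m w v := by
  rintro (⟨g, _|_⟩ | ⟨p, e⟩) (⟨h, _|_⟩ | ⟨q, f⟩) hadj <;>
    simp only [adj, S00, S11, Tc] at hadj ⊢
  · have key : ∀ s : QuaternionGroup m, g⁻¹ * h = s → h⁻¹ * g = s⁻¹ := by
      intro s hs; rw [← hs]; simp [mul_inv_rev]
    rcases hadj with hs | hs | hs | hs
    · right; left
      rw [key _ hs]; rfl
    · left
      rw [key _ hs]; show a (- -1) = a 1; norm_num
    · right; right; right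
      rw [key _ hs]
      show xa (((m:ℕ) : ZMod (2*m)) + (0 : ZMod (2*m))) = xa ((m:ℕ) : ZMod (2*m))
      rw [add_zero]
    · right; right; left
      rw [key _ hs]
      show xa (((m:ℕ) : ZMod (2*m)) + ((m:ℕ) : ZMod (2*m))) = xa (0 : ZMod (2*m))
      rw [mm0]
  · exact hadj
  · exact hadj
  · have key : ∀ s : QuaternionGroup m, g⁻¹ * h = s → h⁻¹ * g = s⁻¹ := by
      intro s hs; rw [← hs]; simp [mul_inv_rev]
    rcases hadj with hs | hs
    · right; rw [key _ hs]
      show xa (((m:ℕ) : ZMod (2*m)) + (0 : ZMod (2*m))) = xa ((m:ℕ) : ZMod (2*m))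
      rw [add_zero]
    · left; rw [key _ hs]
      show xa (((m:ℕ) : ZMod (2*m)) + ((m:ℕ) : ZMod (2*m))) = xa (0 : ZMod (2*m))
      rw [mm0]
  · rcases hadj with ⟨h1, h2, h3⟩ | ⟨h1, h2, h3⟩
    · exact Or.inl ⟨h1.symm, h2.symm, h1 ▸ h3⟩
    · exact Or.inr ⟨fun hc => h1 hc.symm, h3, h2⟩

lemma adj_irrefl : ∀ v : V m, ¬ adj m v v := by
  rintro (⟨g, _|_⟩ | ⟨p, e⟩) hadj <;>
    simp only [adj, S00, S11, Tc, inv_mul_cancel] at hadj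
  · rcases hadj with hs | hs | hs | hs <;> rw [QuaternionGroup.one_def] at hs <;>
      simp only [QuaternionGroup.a.injEq, reduceCtorEq] at hs
    · exact e1 (m := m) (by linear_combination -hs)
    · exact e1 (m := m) (by linear_combination hs)
  · rcases hadj with hs | hs <;> rw [QuaternionGroup.one_def] at hs <;> simp only [reduceCtorEq] at hs
  · tauto

def X : SimpleGraph (V m) := ⟨adj m, ⟨fun v w h => adj_symm m v w h⟩, ⟨fun v h => adj_irrefl m v h⟩⟩

def A0 (i : ZMod (2*m)) : V m := .inl (a i, false)
def B0 (k : ZMod (2*m)) : V m := .inl (xa k, false)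
def A1 (i : ZMod (2*m)) : V m := .inl (a i, true)
def B1 (k : ZMod (2*m)) : V m := .inl (xa k, true)
def Gd (p : Fin 3) (e : ZMod 2) : V m := .inr (p, e)

section eqlemmas
variable {m : ℕ}

@[simp] lemma A0_eq_A0 {i j} : A0 m i = A0 m j ↔ i = j := by simp [A0]
@[simp] lemma B0_eq_B0 {i j} : B0 m i = B0 m j ↔ i = j := by simp [B0]
@[simp] lemma A1_eq_A1 {i j} : A1 m i = A1 m j ↔ i = j := by simp [A1]
@[simp] lemma B1_eq_B1 {i j} : B1 m i = B1 m j ↔ i = j := by simp [B1]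
@[simp] lemma A0_ne_B0 {i j} : A0 m i = B0 m j ↔ False := by simp [A0, B0]
@[simp] lemma B0_ne_A0 {i j} : B0 m i = A0 m j ↔ False := by simp [A0, B0]
@[simp] lemma A0_ne_A1 {i j} : A0 m i = A1 m j ↔ False := by simp [A0, A1]
@[simp] lemma A1_ne_A0 {i j} : A1 m i = A0 m j ↔ False := by simp [A0, A1]
@[simp] lemma A0_ne_B1 {i j} : A0 m i = B1 m j ↔ False := by simp [A0, B1]
@[simp] lemma B1_ne_A0 {i j} : B1 m i = A0 m j ↔ False := by simp [A0, B1]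
@[simp] lemma B0_ne_A1 {i j} : B0 m i = A1 m j ↔ False := by simp [B0, A1]
@[simp] lemma A1_ne_B0 {i j} : A1 m i = B0 m j ↔ False := by simp [B0, A1]
@[simp] lemma B0_ne_B1 {i j} : B0 m i = B1 m j ↔ False := by simp [B0, B1]
@[simp] lemma B1_ne_B0 {i j} : B1 m i = B0 m j ↔ False := by simp [B0, B1]
@[simp] lemma A1_ne_B1 {i j} : A1 m i = B1 m j ↔ False := by simp [A1, B1]
@[simp] lemma B1_ne_A1 {i j} : B1 m i = A1 m j ↔ False := by simp [A1, B1]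
@[simp] lemma Gd_eq_Gd {p q e f} : Gd m p e = Gd m q f ↔ p = q ∧ e = f := by simp [Gd]
@[simp] lemma A0_ne_Gd {i p e} : A0 m i = Gd m p e ↔ False := by simp [A0, Gd]
@[simp] lemma B0_ne_Gd {i p e} : B0 m i = Gd m p e ↔ False := by simp [B0, Gd]
@[simp] lemma A1_ne_Gd {i p e} : A1 m i = Gd m p e ↔ False := by simp [A1, Gd]
@[simp] lemma B1_ne_Gd {i p e} : B1 m i = Gd m p e ↔ False := by simp [B1, Gd]

end eqlemmas

open SimpleGraph

lemma adj_A0_iff (i : ZMod (2*m)) (w : V m) : (X m).Adj (A0 m i) w ↔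
    w = A0 m (i+1) ∨ w = A0 m (i-1) ∨ w = B0 m (-i) ∨ w = B0 m ((m : ZMod (2*m))-i) ∨
    w = A1 m i ∨ w = B1 m (-i) ∨ w = B1 m (-1-i) := by
  rcases w with ⟨(j | j), _|_⟩ | ⟨p, e⟩
  · have e : (a i)⁻¹ * (a j : QuaternionGroup m) = a (-i + j) := rfl
    show S00 m ((a i)⁻¹ * a j) ↔ _
    rw [e]
    simp only [S00, A0, B0, A1, B1, Sum.inl.injEq, Prod.mk.injEq,
      QuaternionGroup.a.injEq, QuaternionGroup.xa.injEq, reduceCtorEq,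
      and_true, true_and, and_false, false_and, or_false, false_or]
    constructor
    · rintro (h | h)
      · exact Or.inl (by linear_combination h)
      · exact Or.inr (by linear_combination h)
    · rintro (h | h)
      · exact Or.inl (by linear_combination h)
      · exact Or.inr (by linear_combination h)
  · have e : (a i)⁻¹ * (a j : QuaternionGroup m) = a (-i + j) := rfl
    show Tc m ((a i)⁻¹ * a j) ↔ _
    rw [e]
    simp only [Tc, A0, B0, A1, B1, Sum.inl.injEq, Prod.mk.injEq,
      QuaternionGroup.a.injEq, QuaternionGroup.xa.injEq, reduceCtorEq,
      and_true, true_and, and_false, false_and, or_false, false_or]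
    constructor
    · intro h; linear_combination h
    · intro h; linear_combination h
  · have e : (a i)⁻¹ * (xa j : QuaternionGroup m) = xa (j - -i) := rfl
    show S00 m ((a i)⁻¹ * xa j) ↔ _
    rw [e]
    simp only [S00, A0, B0, A1, B1, Sum.inl.injEq, Prod.mk.injEq,
      QuaternionGroup.a.injEq, QuaternionGroup.xa.injEq, reduceCtorEq,
      and_true, true_and, and_false, false_and, or_false, false_or]
    constructor
    · rintro (h | h)
      · exact Or.inl (by linear_combination h)
      · exact Or.inr (by linear_combination h)
    · rintro (h | h)
      · exact Or.inl (by linear_combination h)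
      · exact Or.inr (by linear_combination h)
  · have e : (a i)⁻¹ * (xa j : QuaternionGroup m) = xa (j - -i) := rfl
    show Tc m ((a i)⁻¹ * xa j) ↔ _
    rw [e]
    simp only [Tc, A0, B0, A1, B1, Sum.inl.injEq, Prod.mk.injEq,
      QuaternionGroup.a.injEq, QuaternionGroup.xa.injEq, reduceCtorEq,
      and_true, true_and, and_false, false_and, or_false, false_or]
    constructor
    · rintro (h | h)
      · exact Or.inl (by linear_combination h)
      · exact Or.inr (by linear_combination h)
    · rintro (h | h)
      · exact Or.inl (by linear_combination h)
      · exact Or.inr (by linear_combination h)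
  · show False ↔ _
    simp [A0, B0, A1, B1]

lemma adj_B0_iff (k : ZMod (2*m)) (w : V m) : (X m).Adj (B0 m k) w ↔
    w = B0 m (k+1) ∨ w = B0 m (k-1) ∨ w = A0 m ((m : ZMod (2*m))-k) ∨ w = A0 m (-k) ∨
    w = B1 m k ∨ w = A1 m ((m : ZMod (2*m))-k) ∨ w = A1 m ((m : ZMod (2*m))-1-k) := by
  have mm0 := mm0 (m := m)
  rcases w with ⟨(j | j), _|_⟩ | ⟨p, e⟩
  · have e : (xa k)⁻¹ * (a j : QuaternionGroup m) = xa ((m : ZMod (2*m)) + k + j) := rfl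
    show S00 m ((xa k)⁻¹ * a j) ↔ _
    rw [e]
    simp only [S00, A0, B0, A1, B1, Sum.inl.injEq, Prod.mk.injEq,
      QuaternionGroup.a.injEq, QuaternionGroup.xa.injEq, reduceCtorEq,
      and_true, true_and, and_false, false_and, or_false, false_or]
    constructor
    · rintro (h | h)
      · exact Or.inl (by linear_combination h - mm0)
      · exact Or.inr (by linear_combination h)
    · rintro (h | h)
      · exact Or.inl (by linear_combination h + mm0)
      · exact Or.inr (by linear_combination h)
  · have e : (xa k)⁻¹ * (a j : QuaternionGroup m) = xa ((m : ZMod (2*m)) + k + j) := rfl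
    show Tc m ((xa k)⁻¹ * a j) ↔ _
    rw [e]
    simp only [Tc, A0, B0, A1, B1, Sum.inl.injEq, Prod.mk.injEq,
      QuaternionGroup.a.injEq, QuaternionGroup.xa.injEq, reduceCtorEq,
      and_true, true_and, and_false, false_and, or_false, false_or]
    constructor
    · rintro (h | h)
      · exact Or.inl (by linear_combination h - mm0)
      · exact Or.inr (by linear_combination h - mm0)
    · rintro (h | h)
      · exact Or.inl (by linear_combination h + mm0)
      · exact Or.inr (by linear_combination h + mm0)
  · have e : (xa k)⁻¹ * (xa j : QuaternionGroup m) =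
        a ((m : ZMod (2*m)) + j - ((m : ZMod (2*m)) + k)) := rfl
    show S00 m ((xa k)⁻¹ * xa j) ↔ _
    rw [e]
    simp only [S00, A0, B0, A1, B1, Sum.inl.injEq, Prod.mk.injEq,
      QuaternionGroup.a.injEq, QuaternionGroup.xa.injEq, reduceCtorEq,
      and_true, true_and, and_false, false_and, or_false, false_or]
    constructor
    · rintro (h | h)
      · exact Or.inl (by linear_combination h)
      · exact Or.inr (by linear_combination h)
    · rintro (h | h)
      · exact Or.inl (by linear_combination h)
      · exact Or.inr (by linear_combination h)
  · have e : (xa k)⁻¹ * (xa j : QuaternionGroup m) =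
        a ((m : ZMod (2*m)) + j - ((m : ZMod (2*m)) + k)) := rfl
    show Tc m ((xa k)⁻¹ * xa j) ↔ _
    rw [e]
    simp only [Tc, A0, B0, A1, B1, Sum.inl.injEq, Prod.mk.injEq,
      QuaternionGroup.a.injEq, QuaternionGroup.xa.injEq, reduceCtorEq,
      and_true, true_and, and_false, false_and, or_false, false_or]
    constructor
    · intro h; linear_combination h
    · intro h; linear_combination h
  · show False ↔ _
    simp [A0, B0, A1, B1]

lemma adj_A1_iff (i : ZMod (2*m)) (w : V m) : (X m).Adj (A1 m i) w ↔
    w = A0 m i ∨ w = B0 m ((m : ZMod (2*m))-i) ∨ w = B0 m ((m : ZMod (2*m))-1-i) ∨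
    w = B1 m (-i) ∨ w = B1 m ((m : ZMod (2*m))-i) := by
  have mm0 := mm0 (m := m)
  rcases w with ⟨(j | j), _|_⟩ | ⟨p, e⟩
  · have e : (a j)⁻¹ * (a i : QuaternionGroup m) = a (-j + i) := rfl
    show Tc m ((a j)⁻¹ * a i) ↔ _
    rw [e]
    simp only [Tc, A0, B0, A1, B1, Sum.inl.injEq, Prod.mk.injEq,
      QuaternionGroup.a.injEq, QuaternionGroup.xa.injEq, reduceCtorEq,
      and_true, true_and, and_false, false_and, or_false, false_or]
    constructor
    · intro h; linear_combination -h
    · intro h; linear_combination -h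
  · have e : (a i)⁻¹ * (a j : QuaternionGroup m) = a (-i + j) := rfl
    show S11 m ((a i)⁻¹ * a j) ↔ _
    rw [e]
    simp only [S11, A0, B0, A1, B1, Sum.inl.injEq, Prod.mk.injEq,
      QuaternionGroup.a.injEq, QuaternionGroup.xa.injEq, reduceCtorEq,
      and_true, true_and, and_false, false_and, or_false, false_or, or_self]
  · have e : (xa j)⁻¹ * (a i : QuaternionGroup m) = xa ((m : ZMod (2*m)) + j + i) := rfl
    show Tc m ((xa j)⁻¹ * a i) ↔ _
    rw [e]
    simp only [Tc, A0, B0, A1, B1, Sum.inl.injEq, Prod.mk.injEq,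
      QuaternionGroup.a.injEq, QuaternionGroup.xa.injEq, reduceCtorEq,
      and_true, true_and, and_false, false_and, or_false, false_or]
    constructor
    · rintro (h | h)
      · exact Or.inl (by linear_combination h - mm0)
      · exact Or.inr (by linear_combination h - mm0)
    · rintro (h | h)
      · exact Or.inl (by linear_combination h + mm0)
      · exact Or.inr (by linear_combination h + mm0)
  · have e : (a i)⁻¹ * (xa j : QuaternionGroup m) = xa (j - -i) := rfl
    show S11 m ((a i)⁻¹ * xa j) ↔ _
    rw [e]
    simp only [S11, A0, B0, A1, B1, Sum.inl.injEq, Prod.mk.injEq,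
      QuaternionGroup.a.injEq, QuaternionGroup.xa.injEq, reduceCtorEq,
      and_true, true_and, and_false, false_and, or_false, false_or]
    constructor
    · rintro (h | h)
      · exact Or.inl (by linear_combination h)
      · exact Or.inr (by linear_combination h)
    · rintro (h | h)
      · exact Or.inl (by linear_combination h)
      · exact Or.inr (by linear_combination h)
  · show False ↔ _
    simp [A0, B0, A1, B1]

lemma adj_B1_iff (k : ZMod (2*m)) (w : V m) : (X m).Adj (B1 m k) w ↔
    w = A0 m (-k) ∨ w = A0 m (-1-k) ∨ w = B0 m k ∨
    w = A1 m (-k) ∨ w = A1 m ((m : ZMod (2*m))-k) := by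
  have mm0 := mm0 (m := m)
  rcases w with ⟨(j | j), _|_⟩ | ⟨p, e⟩
  · have e : (a j)⁻¹ * (xa k : QuaternionGroup m) = xa (k - -j) := rfl
    show Tc m ((a j)⁻¹ * xa k) ↔ _
    rw [e]
    simp only [Tc, A0, B0, A1, B1, Sum.inl.injEq, Prod.mk.injEq,
      QuaternionGroup.a.injEq, QuaternionGroup.xa.injEq, reduceCtorEq,
      and_true, true_and, and_false, false_and, or_false, false_or]
    constructor
    · rintro (h | h)
      · exact Or.inl (by linear_combination h)
      · exact Or.inr (by linear_combination h)
    · rintro (h | h)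
      · exact Or.inl (by linear_combination h)
      · exact Or.inr (by linear_combination h)
  · have e : (xa k)⁻¹ * (a j : QuaternionGroup m) = xa ((m : ZMod (2*m)) + k + j) := rfl
    show S11 m ((xa k)⁻¹ * a j) ↔ _
    rw [e]
    simp only [S11, A0, B0, A1, B1, Sum.inl.injEq, Prod.mk.injEq,
      QuaternionGroup.a.injEq, QuaternionGroup.xa.injEq, reduceCtorEq,
      and_true, true_and, and_false, false_and, or_false, false_or]
    constructor
    · rintro (h | h)
      · exact Or.inr (by linear_combination h - mm0)
      · exact Or.inl (by linear_combination h)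
    · rintro (h | h)
      · exact Or.inr (by linear_combination h)
      · exact Or.inl (by linear_combination h + mm0)
  · have e : (xa j)⁻¹ * (xa k : QuaternionGroup m) =
        a ((m : ZMod (2*m)) + k - ((m : ZMod (2*m)) + j)) := rfl
    show Tc m ((xa j)⁻¹ * xa k) ↔ _
    rw [e]
    simp only [Tc, A0, B0, A1, B1, Sum.inl.injEq, Prod.mk.injEq,
      QuaternionGroup.a.injEq, QuaternionGroup.xa.injEq, reduceCtorEq,
      and_true, true_and, and_false, false_and, or_false, false_or]
    constructor
    · intro h; linear_combination -h
    · intro h; linear_combination -h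
  · have e : (xa k)⁻¹ * (xa j : QuaternionGroup m) =
        a ((m : ZMod (2*m)) + j - ((m : ZMod (2*m)) + k)) := rfl
    show S11 m ((xa k)⁻¹ * xa j) ↔ _
    rw [e]
    simp only [S11, A0, B0, A1, B1, Sum.inl.injEq, Prod.mk.injEq,
      QuaternionGroup.a.injEq, QuaternionGroup.xa.injEq, reduceCtorEq,
      and_true, true_and, and_false, false_and, or_false, false_or, or_self]
  · show False ↔ _
    simp [A0, B0, A1, B1]

open SimpleGraph

noncomputable instance nbFin (v : V m) : Fintype ((X m).neighborSet v) :=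
  Fintype.ofFinite _

lemma zmod2_ne_iff (e f : ZMod 2) : e ≠ f ↔ f = e + 1 := by revert e f; decide

lemma adj_Gd0_iff (e : ZMod 2) (w : V m) :
    (X m).Adj (Gd m 0 e) w ↔ w = Gd m 0 (e+1) := by
  rcases w with ⟨g, l⟩ | ⟨q, f⟩
  · show False ↔ _
    rcases g with j | j <;> rcases l with _ | _ <;> simp [A0, B0, A1, B1, Gd]
  · show ((0 : Fin 3) = q ∧ e ≠ f ∧ (0 : Fin 3) ≠ 1) ∨ ((0:Fin 3) ≠ q ∧ (0:Fin 3) ≠ 0 ∧ q ≠ 0) ↔ _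
    simp only [Gd, Sum.inr.injEq, Prod.mk.injEq]
    revert q f e; decide

lemma adj_Gd1_iff (e : ZMod 2) (w : V m) :
    (X m).Adj (Gd m 1 e) w ↔ w = Gd m 2 0 ∨ w = Gd m 2 1 := by
  rcases w with ⟨g, l⟩ | ⟨q, f⟩
  · show False ↔ _
    rcases g with j | j <;> rcases l with _ | _ <;> simp [A0, B0, A1, B1, Gd]
  · show ((1 : Fin 3) = q ∧ e ≠ f ∧ (1 : Fin 3) ≠ 1) ∨ ((1:Fin 3) ≠ q ∧ (1:Fin 3) ≠ 0 ∧ q ≠ 0) ↔ _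
    simp only [Gd, Sum.inr.injEq, Prod.mk.injEq]
    revert q f e; decide

lemma adj_Gd2_iff (e : ZMod 2) (w : V m) :
    (X m).Adj (Gd m 2 e) w ↔ w = Gd m 1 0 ∨ w = Gd m 1 1 ∨ w = Gd m 2 (e+1) := by
  rcases w with ⟨g, l⟩ | ⟨q, f⟩
  · show False ↔ _
    rcases g with j | j <;> rcases l with _ | _ <;> simp [A0, B0, A1, B1, Gd]
  · show ((2 : Fin 3) = q ∧ e ≠ f ∧ (2 : Fin 3) ≠ 1) ∨ ((2:Fin 3) ≠ q ∧ (2:Fin 3) ≠ 0 ∧ q ≠ 0) ↔ _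
    simp only [Gd, Sum.inr.injEq, Prod.mk.injEq]
    revert q f e; decide

lemma nbF_A0 (i : ZMod (2*m)) : (X m).neighborFinset (A0 m i) =
    {A0 m (i+1), A0 m (i-1), B0 m (-i), B0 m ((m : ZMod (2*m))-i), A1 m i,
     B1 m (-i), B1 m (-1-i)} := by
  ext w; rw [mem_neighborFinset, adj_A0_iff]
  simp only [Finset.mem_insert, Finset.mem_singleton]

lemma nbF_B0 (k : ZMod (2*m)) : (X m).neighborFinset (B0 m k) =
    {B0 m (k+1), B0 m (k-1), A0 m ((m : ZMod (2*m))-k), A0 m (-k), B1 m k,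
     A1 m ((m : ZMod (2*m))-k), A1 m ((m : ZMod (2*m))-1-k)} := by
  ext w; rw [mem_neighborFinset, adj_B0_iff]
  simp only [Finset.mem_insert, Finset.mem_singleton]

lemma nbF_A1 (i : ZMod (2*m)) : (X m).neighborFinset (A1 m i) =
    {A0 m i, B0 m ((m : ZMod (2*m))-i), B0 m ((m : ZMod (2*m))-1-i), B1 m (-i),
     B1 m ((m : ZMod (2*m))-i)} := by
  ext w; rw [mem_neighborFinset, adj_A1_iff]
  simp only [Finset.mem_insert, Finset.mem_singleton]

lemma nbF_B1 (k : ZMod (2*m)) : (X m).neighborFinset (B1 m k) =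
    {A0 m (-k), A0 m (-1-k), B0 m k, A1 m (-k), A1 m ((m : ZMod (2*m))-k)} := by
  ext w; rw [mem_neighborFinset, adj_B1_iff]
  simp only [Finset.mem_insert, Finset.mem_singleton]

lemma deg_A0 (i : ZMod (2*m)) : (X m).degree (A0 m i) = 7 := by
  rw [SimpleGraph.degree, nbF_A0]
  rw [Finset.card_insert_of_notMem (by
    simp only [Finset.mem_insert, Finset.mem_singleton, A0_eq_A0, A0_ne_B0, A0_ne_A1,
      A0_ne_B1, or_false, false_or]
    exact fun h => e2 (m := m) (by linear_combination h))]
  rw [Finset.card_insert_of_notMem (by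
    simp only [Finset.mem_insert, Finset.mem_singleton, A0_ne_B0, A0_ne_A1, A0_ne_B1,
      or_self, not_false_eq_true])]
  rw [Finset.card_insert_of_notMem (by
    simp only [Finset.mem_insert, Finset.mem_singleton, B0_eq_B0, B0_ne_A1, B0_ne_B1,
      or_false, false_or]
    exact fun h => em (m := m) (by linear_combination -h))]
  rw [Finset.card_insert_of_notMem (by
    simp only [Finset.mem_insert, Finset.mem_singleton, B0_ne_A1, B0_ne_B1, or_self,
      not_false_eq_true])]
  rw [Finset.card_insert_of_notMem (by
    simp only [Finset.mem_insert, Finset.mem_singleton, A1_ne_B1, or_self,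
      not_false_eq_true])]
  rw [Finset.card_insert_of_notMem (by
    simp only [Finset.mem_singleton, B1_eq_B1]
    exact fun h => e1 (m := m) (by linear_combination h))]
  rw [Finset.card_singleton]

lemma deg_B0 (k : ZMod (2*m)) : (X m).degree (B0 m k) = 7 := by
  rw [SimpleGraph.degree, nbF_B0]
  rw [Finset.card_insert_of_notMem (by
    simp only [Finset.mem_insert, Finset.mem_singleton, B0_eq_B0, B0_ne_A0, B0_ne_B1,
      B0_ne_A1, or_false, false_or]
    exact fun h => e2 (m := m) (by linear_combination h))]
  rw [Finset.card_insert_of_notMem (by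
    simp only [Finset.mem_insert, Finset.mem_singleton, B0_ne_A0, B0_ne_B1, B0_ne_A1,
      or_self, not_false_eq_true])]
  rw [Finset.card_insert_of_notMem (by
    simp only [Finset.mem_insert, Finset.mem_singleton, A0_eq_A0, A0_ne_B1, A0_ne_A1,
      or_false, false_or]
    exact fun h => em (m := m) (by linear_combination h))]
  rw [Finset.card_insert_of_notMem (by
    simp only [Finset.mem_insert, Finset.mem_singleton, A0_ne_B1, A0_ne_A1, or_self,
      not_false_eq_true])]
  rw [Finset.card_insert_of_notMem (by
    simp only [Finset.mem_insert, Finset.mem_singleton, B1_ne_A1, or_self,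
      not_false_eq_true])]
  rw [Finset.card_insert_of_notMem (by
    simp only [Finset.mem_singleton, A1_eq_A1]
    exact fun h => e1 (m := m) (by linear_combination h))]
  rw [Finset.card_singleton]

lemma deg_A1 (i : ZMod (2*m)) : (X m).degree (A1 m i) = 5 := by
  rw [SimpleGraph.degree, nbF_A1]
  rw [Finset.card_insert_of_notMem (by
    simp only [Finset.mem_insert, Finset.mem_singleton, A0_ne_B0, A0_ne_B1, or_self,
      not_false_eq_true])]
  rw [Finset.card_insert_of_notMem (by
    simp only [Finset.mem_insert, Finset.mem_singleton, B0_eq_B0, B0_ne_B1, or_false,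
      false_or]
    exact fun h => e1 (m := m) (by linear_combination h))]
  rw [Finset.card_insert_of_notMem (by
    simp only [Finset.mem_insert, Finset.mem_singleton, B0_ne_B1, or_self,
      not_false_eq_true])]
  rw [Finset.card_insert_of_notMem (by
    simp only [Finset.mem_singleton, B1_eq_B1]
    exact fun h => em (m := m) (by linear_combination -h))]
  rw [Finset.card_singleton]

lemma deg_B1 (k : ZMod (2*m)) : (X m).degree (B1 m k) = 5 := by
  rw [SimpleGraph.degree, nbF_B1]
  rw [Finset.card_insert_of_notMem (by
    simp only [Finset.mem_insert, Finset.mem_singleton, A0_eq_A0, A0_ne_B0, A0_ne_A1,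
      or_false, false_or]
    exact fun h => e1 (m := m) (by linear_combination h))]
  rw [Finset.card_insert_of_notMem (by
    simp only [Finset.mem_insert, Finset.mem_singleton, A0_ne_B0, A0_ne_A1, or_self,
      not_false_eq_true])]
  rw [Finset.card_insert_of_notMem (by
    simp only [Finset.mem_insert, Finset.mem_singleton, B0_ne_A1, or_self,
      not_false_eq_true])]
  rw [Finset.card_insert_of_notMem (by
    simp only [Finset.mem_singleton, A1_eq_A1]
    exact fun h => em (m := m) (by linear_combination -h))]
  rw [Finset.card_singleton]

lemma deg_Gd0 (e : ZMod 2) : (X m).degree (Gd m 0 e) = 1 := by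
  have : (X m).neighborFinset (Gd m 0 e) = {Gd m 0 (e+1)} := by
    ext w; rw [mem_neighborFinset, adj_Gd0_iff]; simp
  rw [SimpleGraph.degree, this, Finset.card_singleton]

lemma deg_Gd1 (e : ZMod 2) : (X m).degree (Gd m 1 e) = 2 := by
  have : (X m).neighborFinset (Gd m 1 e) = {Gd m 2 0, Gd m 2 1} := by
    ext w; rw [mem_neighborFinset, adj_Gd1_iff]
    simp only [Finset.mem_insert, Finset.mem_singleton]
  rw [SimpleGraph.degree, this]
  rw [Finset.card_insert_of_notMem (by simp), Finset.card_singleton]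

lemma deg_Gd2 (e : ZMod 2) : (X m).degree (Gd m 2 e) = 3 := by
  have : (X m).neighborFinset (Gd m 2 e) = {Gd m 1 0, Gd m 1 1, Gd m 2 (e+1)} := by
    ext w; rw [mem_neighborFinset, adj_Gd2_iff]
    simp only [Finset.mem_insert, Finset.mem_singleton]
  rw [SimpleGraph.degree, this]
  rw [Finset.card_insert_of_notMem (by simp), Finset.card_insert_of_notMem (by simp), Finset.card_singleton]

lemma iso_degree (φ : (X m) ≃g (X m)) (v : V m) : (X m).degree (φ v) = (X m).degree v := by
  rw [← card_neighborSet_eq_degree, ← card_neighborSet_eq_degree]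
  exact Fintype.card_congr (Iso.mapNeighborSet φ v).symm

section rigidity
variable {m : ℕ} [hm : Fact (2 ≤ m)]

open SimpleGraph

/-! ### Shape classification by degree -/

lemma deg7_shape (v : V m) (h : (X m).degree v = 7) :
    (∃ i, v = A0 m i) ∨ (∃ k, v = B0 m k) := by
  rcases v with ⟨(j | j), _|_⟩ | ⟨p, e⟩
  · exact Or.inl ⟨j, rfl⟩
  · rw [show (Sum.inl (a j, true) : V m) = A1 m j from rfl, deg_A1] at h; omega
  · exact Or.inr ⟨j, rfl⟩
  · rw [show (Sum.inl (xa j, true) : V m) = B1 m j from rfl, deg_B1] at h; omega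
  · have hp : ∀ q : Fin 3, q = 0 ∨ q = 1 ∨ q = 2 := by decide
    rcases hp p with rfl | rfl | rfl
    · rw [show (Sum.inr ((0 : Fin 3), e) : V m) = Gd m 0 e from rfl, deg_Gd0] at h; omega
    · rw [show (Sum.inr ((1 : Fin 3), e) : V m) = Gd m 1 e from rfl, deg_Gd1] at h; omega
    · rw [show (Sum.inr ((2 : Fin 3), e) : V m) = Gd m 2 e from rfl, deg_Gd2] at h; omega

lemma deg5_shape (v : V m) (h : (X m).degree v = 5) :
    (∃ i, v = A1 m i) ∨ (∃ k, v = B1 m k) := by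
  rcases v with ⟨(j | j), _|_⟩ | ⟨p, e⟩
  · rw [show (Sum.inl (a j, false) : V m) = A0 m j from rfl, deg_A0] at h; omega
  · exact Or.inl ⟨j, rfl⟩
  · rw [show (Sum.inl (xa j, false) : V m) = B0 m j from rfl, deg_B0] at h; omega
  · exact Or.inr ⟨j, rfl⟩
  · have hp : ∀ q : Fin 3, q = 0 ∨ q = 1 ∨ q = 2 := by decide
    rcases hp p with rfl | rfl | rfl
    · rw [show (Sum.inr ((0 : Fin 3), e) : V m) = Gd m 0 e from rfl, deg_Gd0] at h; omega
    · rw [show (Sum.inr ((1 : Fin 3), e) : V m) = Gd m 1 e from rfl, deg_Gd1] at h; omega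
    · rw [show (Sum.inr ((2 : Fin 3), e) : V m) = Gd m 2 e from rfl, deg_Gd2] at h; omega

/-! ### Membership helpers -/

lemma nbA0_A0 {i c : ZMod (2*m)} (h : (X m).Adj (A0 m i) (A0 m c)) : c = i+1 ∨ c = i-1 := by
  rcases (adj_A0_iff m i _).mp h with hx|hx|hx|hx|hx|hx|hx <;>
    simp only [A0_eq_A0, A0_ne_B0, A0_ne_A1, A0_ne_B1] at hx
  exacts [Or.inl hx, Or.inr hx]

lemma nbA0_B0 {i c : ZMod (2*m)} (h : (X m).Adj (A0 m i) (B0 m c)) :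
    c = -i ∨ c = (m : ZMod (2*m))-i := by
  rcases (adj_A0_iff m i _).mp h with hx|hx|hx|hx|hx|hx|hx <;>
    simp only [B0_eq_B0, B0_ne_A0, B0_ne_A1, B0_ne_B1] at hx
  exacts [Or.inl hx, Or.inr hx]

lemma nbA0_A1 {i c : ZMod (2*m)} (h : (X m).Adj (A0 m i) (A1 m c)) : c = i := by
  rcases (adj_A0_iff m i _).mp h with hx|hx|hx|hx|hx|hx|hx <;>
    simp only [A1_eq_A1, A1_ne_A0, A1_ne_B0, A1_ne_B1] at hx
  exact hx

lemma nbA0_B1 {i c : ZMod (2*m)} (h : (X m).Adj (A0 m i) (B1 m c)) :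
    c = -i ∨ c = -1-i := by
  rcases (adj_A0_iff m i _).mp h with hx|hx|hx|hx|hx|hx|hx <;>
    simp only [B1_eq_B1, B1_ne_A0, B1_ne_B0, B1_ne_A1] at hx
  exacts [Or.inl hx, Or.inr hx]

lemma nbA1_A0 {i c : ZMod (2*m)} (h : (X m).Adj (A1 m i) (A0 m c)) : c = i := by
  rcases (adj_A1_iff m i _).mp h with hx|hx|hx|hx|hx <;>
    simp only [A0_eq_A0, A0_ne_B0, A0_ne_A1, A0_ne_B1] at hx
  exact hx

lemma nbA1_B0 {i c : ZMod (2*m)} (h : (X m).Adj (A1 m i) (B0 m c)) :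
    c = (m : ZMod (2*m))-i ∨ c = (m : ZMod (2*m))-1-i := by
  rcases (adj_A1_iff m i _).mp h with hx|hx|hx|hx|hx <;>
    simp only [B0_eq_B0, B0_ne_A0, B0_ne_A1, B0_ne_B1] at hx
  exacts [Or.inl hx, Or.inr hx]

lemma nbA1_A1 {i c : ZMod (2*m)} (h : (X m).Adj (A1 m i) (A1 m c)) : False := by
  rcases (adj_A1_iff m i _).mp h with hx|hx|hx|hx|hx <;>
    simp only [A1_eq_A1, A1_ne_A0, A1_ne_B0, A1_ne_B1] at hx

lemma nbA1_B1 {i c : ZMod (2*m)} (h : (X m).Adj (A1 m i) (B1 m c)) :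
    c = -i ∨ c = (m : ZMod (2*m))-i := by
  rcases (adj_A1_iff m i _).mp h with hx|hx|hx|hx|hx <;>
    simp only [B1_eq_B1, B1_ne_A0, B1_ne_B0, B1_ne_A1] at hx
  exacts [Or.inl hx, Or.inr hx]

lemma nbB1_A0 {k c : ZMod (2*m)} (h : (X m).Adj (B1 m k) (A0 m c)) :
    c = -k ∨ c = -1-k := by
  rcases (adj_B1_iff m k _).mp h with hx|hx|hx|hx|hx <;>
    simp only [A0_eq_A0, A0_ne_B0, A0_ne_A1, A0_ne_B1] at hx
  exacts [Or.inl hx, Or.inr hx]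

lemma nbB1_B0 {k c : ZMod (2*m)} (h : (X m).Adj (B1 m k) (B0 m c)) : c = k := by
  rcases (adj_B1_iff m k _).mp h with hx|hx|hx|hx|hx <;>
    simp only [B0_eq_B0, B0_ne_A0, B0_ne_A1, B0_ne_B1] at hx
  exact hx

lemma nbB1_A1 {k c : ZMod (2*m)} (h : (X m).Adj (B1 m k) (A1 m c)) :
    c = -k ∨ c = (m : ZMod (2*m))-k := by
  rcases (adj_B1_iff m k _).mp h with hx|hx|hx|hx|hx <;>
    simp only [A1_eq_A1, A1_ne_A0, A1_ne_B0, A1_ne_B1] at hx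
  exacts [Or.inl hx, Or.inr hx]

lemma nbB1_B1 {k c : ZMod (2*m)} (h : (X m).Adj (B1 m k) (B1 m c)) : False := by
  rcases (adj_B1_iff m k _).mp h with hx|hx|hx|hx|hx <;>
    simp only [B1_eq_B1, B1_ne_A0, B1_ne_B0, B1_ne_A1] at hx

/-! ### Positive adjacencies -/

lemma padj_v0_x1 (i : ZMod (2*m)) : (X m).Adj (A0 m i) (A0 m (i+1)) :=
  (adj_A0_iff m i _).mpr (Or.inl rfl)

lemma padj_v0_x2 (i : ZMod (2*m)) : (X m).Adj (A0 m i) (A0 m (i-1)) :=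
  (adj_A0_iff m i _).mpr (Or.inr (Or.inl rfl))

lemma padj_v0_y1 (i : ZMod (2*m)) : (X m).Adj (A0 m i) (B0 m (-i)) :=
  (adj_A0_iff m i _).mpr (Or.inr (Or.inr (Or.inl rfl)))

lemma padj_v0_y2 (i : ZMod (2*m)) : (X m).Adj (A0 m i) (B0 m ((m : ZMod (2*m))-i)) :=
  (adj_A0_iff m i _).mpr (Or.inr (Or.inr (Or.inr (Or.inl rfl))))

lemma padj_v0_z1 (i : ZMod (2*m)) : (X m).Adj (A0 m i) (A1 m i) :=
  (adj_A0_iff m i _).mpr (Or.inr (Or.inr (Or.inr (Or.inr (Or.inl rfl)))))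

lemma padj_v0_zb1 (i : ZMod (2*m)) : (X m).Adj (A0 m i) (B1 m (-i)) :=
  (adj_A0_iff m i _).mpr (Or.inr (Or.inr (Or.inr (Or.inr (Or.inr (Or.inl rfl))))))

lemma padj_v0_zb2 (i : ZMod (2*m)) : (X m).Adj (A0 m i) (B1 m (-1-i)) :=
  (adj_A0_iff m i _).mpr (Or.inr (Or.inr (Or.inr (Or.inr (Or.inr (Or.inr rfl))))))

lemma padj_zb1_x2 (i : ZMod (2*m)) : (X m).Adj (B1 m (-i)) (A0 m (i-1)) :=
  (adj_B1_iff m (-i) _).mpr (Or.inr (Or.inl (by rw [A0_eq_A0]; ring)))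

lemma padj_zb1_y1 (i : ZMod (2*m)) : (X m).Adj (B1 m (-i)) (B0 m (-i)) :=
  (adj_B1_iff m (-i) _).mpr (Or.inr (Or.inr (Or.inl rfl)))

lemma padj_z1_zb1 (i : ZMod (2*m)) : (X m).Adj (A1 m i) (B1 m (-i)) :=
  (adj_A1_iff m i _).mpr (Or.inr (Or.inr (Or.inr (Or.inl rfl))))

lemma padj_z1_y2 (i : ZMod (2*m)) : (X m).Adj (A1 m i) (B0 m ((m : ZMod (2*m))-i)) :=
  (adj_A1_iff m i _).mpr (Or.inr (Or.inl rfl))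

lemma padj_zb2_x1 (i : ZMod (2*m)) : (X m).Adj (B1 m (-1-i)) (A0 m (i+1)) :=
  (adj_B1_iff m (-1-i) _).mpr (Or.inl (by rw [A0_eq_A0]; ring))

lemma padj_zb1_w4 (i : ZMod (2*m)) : (X m).Adj (B1 m (-i)) (A1 m ((m : ZMod (2*m))+i)) :=
  (adj_B1_iff m (-i) _).mpr (Or.inr (Or.inr (Or.inr (Or.inr (by rw [A1_eq_A1]; ring)))))

lemma padj_w4_y1 (i : ZMod (2*m)) : (X m).Adj (A1 m ((m : ZMod (2*m))+i)) (B0 m (-i)) :=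
  (adj_A1_iff m _ _).mpr (Or.inr (Or.inl (by rw [B0_eq_B0]; ring)))

/-! ### Transport -/

lemma adj_transport (φ : (X m) ≃g (X m)) {v w : V m} (hv : φ v = v)
    (h : (X m).Adj v w) : (X m).Adj v (φ w) := by
  nth_rewrite 1 [← hv]
  exact φ.map_adj_iff.mpr h

lemma deg_transport (φ : (X m) ≃g (X m)) (w : V m) :
    (X m).degree (φ w) = (X m).degree w := iso_degree m φ w

end rigidity

section fixlemmas
variable {m : ℕ} [hm : Fact (2 ≤ m)]
open SimpleGraph

lemma fix_zb1 (φ : (X m) ≃g (X m)) (i : ZMod (2*m)) (h0 : φ (A0 m i) = A0 m i) :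
    φ (B1 m (-i)) = B1 m (-i) := by
  have hmem : (X m).Adj (A0 m i) (φ (B1 m (-i))) := adj_transport φ h0 (padj_v0_zb1 i)
  have hdeg : (X m).degree (φ (B1 m (-i))) = 5 := by rw [deg_transport]; exact deg_B1 m _
  have hu1 : (X m).Adj (A0 m i) (φ (A0 m (i-1))) := adj_transport φ h0 (padj_v0_x2 i)
  have hu2 : (X m).Adj (A0 m i) (φ (B0 m (-i))) := adj_transport φ h0 (padj_v0_y1 i)
  have hu1d : (X m).degree (φ (A0 m (i-1))) = 7 := by rw [deg_transport]; exact deg_A0 m _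
  have hu2d : (X m).degree (φ (B0 m (-i))) = 7 := by rw [deg_transport]; exact deg_B0 m _
  have hz1 : (X m).Adj (φ (B1 m (-i))) (φ (A0 m (i-1))) := φ.map_adj_iff.mpr (padj_zb1_x2 i)
  have hz2 : (X m).Adj (φ (B1 m (-i))) (φ (B0 m (-i))) := φ.map_adj_iff.mpr (padj_zb1_y1 i)
  have hne : φ (A0 m (i-1)) ≠ φ (B0 m (-i)) := fun hcl => by
    have := φ.toEquiv.injective hcl; simp at this
  rcases (adj_A0_iff m i _).mp hmem with hc|hc|hc|hc|hc|hc|hc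
  · rw [hc, deg_A0] at hdeg; omega
  · rw [hc, deg_A0] at hdeg; omega
  · rw [hc, deg_B0] at hdeg; omega
  · rw [hc, deg_B0] at hdeg; omega
  · exfalso
    rw [hc] at hz1 hz2
    have r1 : φ (A0 m (i-1)) = B0 m ((m:ZMod (2*m)) - i) := by
      rcases deg7_shape _ hu1d with ⟨c, hcc⟩ | ⟨c, hcc⟩
      · exfalso
        rw [hcc] at hz1 hu1
        have hci := nbA1_A0 hz1
        rcases nbA0_A0 hu1 with h'|h' <;> rw [hci] at h'
        · exact e1 (m := m) (by linear_combination -h')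
        · exact e1 (m := m) (by linear_combination h')
      · rw [hcc] at hz1 hu1 ⊢
        rcases nbA1_B0 hz1 with h'|h'
        · rw [B0_eq_B0]; exact h'
        · exfalso
          rcases nbA0_B0 hu1 with h''|h'' <;> rw [h'] at h''
          · exact em1' (m := m) (by linear_combination h'')
          · exact e1 (m := m) (by linear_combination -h'')
    have r2 : φ (B0 m (-i)) = B0 m ((m:ZMod (2*m)) - i) := by
      rcases deg7_shape _ hu2d with ⟨c, hcc⟩ | ⟨c, hcc⟩
      · exfalso
        rw [hcc] at hz2 hu2
        have hci := nbA1_A0 hz2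
        rcases nbA0_A0 hu2 with h'|h' <;> rw [hci] at h'
        · exact e1 (m := m) (by linear_combination -h')
        · exact e1 (m := m) (by linear_combination h')
      · rw [hcc] at hz2 hu2 ⊢
        rcases nbA1_B0 hz2 with h'|h'
        · rw [B0_eq_B0]; exact h'
        · exfalso
          rcases nbA0_B0 hu2 with h''|h'' <;> rw [h'] at h''
          · exact em1' (m := m) (by linear_combination h'')
          · exact e1 (m := m) (by linear_combination -h'')
    exact hne (r1.trans r2.symm)
  · exact hc
  · exfalso
    rw [hc] at hz1 hz2
    have r1 : φ (A0 m (i-1)) = A0 m (i+1) := by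
      rcases deg7_shape _ hu1d with ⟨c, hcc⟩ | ⟨c, hcc⟩
      · rw [hcc] at hz1 hu1 ⊢
        rcases nbB1_A0 hz1 with h'|h'
        · rw [A0_eq_A0]; linear_combination h'
        · exfalso
          rcases nbA0_A0 hu1 with h''|h'' <;> rw [h'] at h''
          · exact e1 (m := m) (by linear_combination -h'')
          · exact e1 (m := m) (by linear_combination h'')
      · exfalso
        rw [hcc] at hz1 hu1
        have hci := nbB1_B0 hz1
        rcases nbA0_B0 hu1 with h''|h'' <;> rw [hci] at h''
        · exact e1 (m := m) (by linear_combination -h'')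
        · exact em1 (m := m) (by linear_combination -h'')
    have r2 : φ (B0 m (-i)) = A0 m (i+1) := by
      rcases deg7_shape _ hu2d with ⟨c, hcc⟩ | ⟨c, hcc⟩
      · rw [hcc] at hz2 hu2 ⊢
        rcases nbB1_A0 hz2 with h'|h'
        · rw [A0_eq_A0]; linear_combination h'
        · exfalso
          rcases nbA0_A0 hu2 with h''|h'' <;> rw [h'] at h''
          · exact e1 (m := m) (by linear_combination -h'')
          · exact e1 (m := m) (by linear_combination h'')
      · exfalso
        rw [hcc] at hz2 hu2
        have hci := nbB1_B0 hz2
        rcases nbA0_B0 hu2 with h''|h'' <;> rw [hci] at h''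
        · exact e1 (m := m) (by linear_combination -h'')
        · exact em1 (m := m) (by linear_combination -h'')
    exact hne (r1.trans r2.symm)

lemma fix_z1 (φ : (X m) ≃g (X m)) (i : ZMod (2*m)) (h0 : φ (A0 m i) = A0 m i)
    (hzb1 : φ (B1 m (-i)) = B1 m (-i)) : φ (A1 m i) = A1 m i := by
  have hmem : (X m).Adj (A0 m i) (φ (A1 m i)) := adj_transport φ h0 (padj_v0_z1 i)
  have hdeg : (X m).degree (φ (A1 m i)) = 5 := by rw [deg_transport]; exact deg_A1 m _
  have hz : (X m).Adj (B1 m (-i)) (φ (A1 m i)) :=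
    adj_transport φ hzb1 (padj_z1_zb1 i).symm
  rcases (adj_A0_iff m i _).mp hmem with hc|hc|hc|hc|hc|hc|hc
  · rw [hc, deg_A0] at hdeg; omega
  · rw [hc, deg_A0] at hdeg; omega
  · rw [hc, deg_B0] at hdeg; omega
  · rw [hc, deg_B0] at hdeg; omega
  · exact hc
  · exfalso; rw [hc] at hz; exact (X m).irrefl hz
  · exfalso; rw [hc] at hz; exact nbB1_B1 hz

lemma fix_zb2 (φ : (X m) ≃g (X m)) (i : ZMod (2*m)) (h0 : φ (A0 m i) = A0 m i)
    (hzb1 : φ (B1 m (-i)) = B1 m (-i)) (hz1 : φ (A1 m i) = A1 m i) :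
    φ (B1 m (-1-i)) = B1 m (-1-i) := by
  have hmem : (X m).Adj (A0 m i) (φ (B1 m (-1-i))) := adj_transport φ h0 (padj_v0_zb2 i)
  have hdeg : (X m).degree (φ (B1 m (-1-i))) = 5 := by rw [deg_transport]; exact deg_B1 m _
  rcases (adj_A0_iff m i _).mp hmem with hc|hc|hc|hc|hc|hc|hc
  · rw [hc, deg_A0] at hdeg; omega
  · rw [hc, deg_A0] at hdeg; omega
  · rw [hc, deg_B0] at hdeg; omega
  · rw [hc, deg_B0] at hdeg; omega
  · exfalso; rw [← hz1] at hc
    have := φ.toEquiv.injective hc; simp at this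
  · exfalso; rw [← hzb1] at hc
    have := φ.toEquiv.injective hc
    rw [B1_eq_B1] at this
    exact e1 (m := m) (by linear_combination -this)
  · exact hc

lemma fix_w4 (φ : (X m) ≃g (X m)) (i : ZMod (2*m))
    (hzb1 : φ (B1 m (-i)) = B1 m (-i)) (hz1 : φ (A1 m i) = A1 m i) :
    φ (A1 m ((m:ZMod (2*m))+i)) = A1 m ((m:ZMod (2*m))+i) := by
  have hmem : (X m).Adj (B1 m (-i)) (φ (A1 m ((m:ZMod (2*m))+i))) :=
    adj_transport φ hzb1 (padj_zb1_w4 i)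
  have hdeg : (X m).degree (φ (A1 m ((m:ZMod (2*m))+i))) = 5 := by
    rw [deg_transport]; exact deg_A1 m _
  rcases deg5_shape _ hdeg with ⟨c, hcc⟩ | ⟨c, hcc⟩
  · rw [hcc] at hmem ⊢
    rcases nbB1_A1 hmem with h'|h'
    · exfalso
      have : φ (A1 m ((m:ZMod (2*m))+i)) = φ (A1 m i) := by
        rw [hcc, hz1, A1_eq_A1]; linear_combination h'
      have h2 := φ.toEquiv.injective this
      rw [A1_eq_A1] at h2
      exact em (m := m) (by linear_combination h2)
    · rw [A1_eq_A1]; linear_combination h'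
  · exfalso; rw [hcc] at hmem; exact nbB1_B1 hmem

lemma fix_y2 (φ : (X m) ≃g (X m)) (i : ZMod (2*m)) (h0 : φ (A0 m i) = A0 m i)
    (hz1 : φ (A1 m i) = A1 m i) :
    φ (B0 m ((m:ZMod (2*m))-i)) = B0 m ((m:ZMod (2*m))-i) := by
  have hmem : (X m).Adj (A0 m i) (φ (B0 m ((m:ZMod (2*m))-i))) :=
    adj_transport φ h0 (padj_v0_y2 i)
  have hz : (X m).Adj (A1 m i) (φ (B0 m ((m:ZMod (2*m))-i))) :=
    adj_transport φ hz1 (padj_z1_y2 i)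
  have hdeg : (X m).degree (φ (B0 m ((m:ZMod (2*m))-i))) = 7 := by
    rw [deg_transport]; exact deg_B0 m _
  rcases deg7_shape _ hdeg with ⟨c, hcc⟩ | ⟨c, hcc⟩
  · exfalso
    rw [hcc] at hmem hz
    have hci := nbA1_A0 hz
    rcases nbA0_A0 hmem with h'|h' <;> rw [hci] at h'
    · exact e1 (m := m) (by linear_combination -h')
    · exact e1 (m := m) (by linear_combination h')
  · rw [hcc] at hmem hz ⊢
    rcases nbA1_B0 hz with h'|h'
    · rw [B0_eq_B0]; exact h'
    · exfalso
      rcases nbA0_B0 hmem with h''|h'' <;> rw [h'] at h''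
      · exact em1' (m := m) (by linear_combination h'')
      · exact e1 (m := m) (by linear_combination -h'')

lemma fix_x1 (φ : (X m) ≃g (X m)) (i : ZMod (2*m)) (h0 : φ (A0 m i) = A0 m i)
    (hzb2 : φ (B1 m (-1-i)) = B1 m (-1-i)) :
    φ (A0 m (i+1)) = A0 m (i+1) := by
  have hmem : (X m).Adj (A0 m i) (φ (A0 m (i+1))) := adj_transport φ h0 (padj_v0_x1 i)
  have hz : (X m).Adj (B1 m (-1-i)) (φ (A0 m (i+1))) :=
    adj_transport φ hzb2 (padj_zb2_x1 i)
  have hdeg : (X m).degree (φ (A0 m (i+1))) = 7 := by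
    rw [deg_transport]; exact deg_A0 m _
  rcases deg7_shape _ hdeg with ⟨c, hcc⟩ | ⟨c, hcc⟩
  · rw [hcc] at hmem hz ⊢
    rcases nbB1_A0 hz with h'|h'
    · rw [A0_eq_A0]; linear_combination h'
    · exfalso
      rcases nbA0_A0 hmem with h''|h'' <;> rw [h'] at h''
      · exact e1 (m := m) (by linear_combination -h'')
      · exact e1 (m := m) (by linear_combination h'')
  · exfalso
    rw [hcc] at hmem hz
    have hci := nbB1_B0 hz
    rcases nbA0_B0 hmem with h''|h'' <;> rw [hci] at h''
    · exact e1 (m := m) (by linear_combination -h'')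
    · exact em1 (m := m) (by linear_combination -h'')

lemma fix_y1 (φ : (X m) ≃g (X m)) (i : ZMod (2*m)) (h0 : φ (A0 m i) = A0 m i)
    (hzb1 : φ (B1 m (-i)) = B1 m (-i))
    (hw4 : φ (A1 m ((m:ZMod (2*m))+i)) = A1 m ((m:ZMod (2*m))+i)) :
    φ (B0 m (-i)) = B0 m (-i) := by
  have hmem : (X m).Adj (A0 m i) (φ (B0 m (-i))) := adj_transport φ h0 (padj_v0_y1 i)
  have hz : (X m).Adj (B1 m (-i)) (φ (B0 m (-i))) :=
    adj_transport φ hzb1 (padj_zb1_y1 i)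
  have hz2 : (X m).Adj (A1 m ((m:ZMod (2*m))+i)) (φ (B0 m (-i))) :=
    adj_transport φ hw4 (padj_w4_y1 i)
  have hdeg : (X m).degree (φ (B0 m (-i))) = 7 := by
    rw [deg_transport]; exact deg_B0 m _
  rcases deg7_shape _ hdeg with ⟨c, hcc⟩ | ⟨c, hcc⟩
  · exfalso
    rw [hcc] at hz hz2
    have hci := nbA1_A0 hz2
    rcases nbB1_A0 hz with h'|h' <;> rw [hci] at h'
    · exact em (m := m) (by linear_combination h')
    · exact em1 (m := m) (by linear_combination h')
  · rw [hcc] at hz ⊢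
    rw [B0_eq_B0]; exact nbB1_B0 hz

lemma fix_x2 (φ : (X m) ≃g (X m)) (i : ZMod (2*m)) (h0 : φ (A0 m i) = A0 m i)
    (hzb1 : φ (B1 m (-i)) = B1 m (-i)) (hy1 : φ (B0 m (-i)) = B0 m (-i)) :
    φ (A0 m (i-1)) = A0 m (i-1) := by
  have hmem : (X m).Adj (A0 m i) (φ (A0 m (i-1))) := adj_transport φ h0 (padj_v0_x2 i)
  have hz : (X m).Adj (B1 m (-i)) (φ (A0 m (i-1))) :=
    adj_transport φ hzb1 (padj_zb1_x2 i)
  have hdeg : (X m).degree (φ (A0 m (i-1))) = 7 := by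
    rw [deg_transport]; exact deg_A0 m _
  rcases deg7_shape _ hdeg with ⟨c, hcc⟩ | ⟨c, hcc⟩
  · rw [hcc] at hmem hz ⊢
    rcases nbB1_A0 hz with h'|h'
    · exfalso
      rcases nbA0_A0 hmem with h''|h'' <;> rw [h'] at h''
      · exact e1 (m := m) (by linear_combination -h'')
      · exact e1 (m := m) (by linear_combination h'')
    · rw [A0_eq_A0]; linear_combination h'
  · exfalso
    rw [hcc] at hz
    have hci := nbB1_B0 hz
    rw [hci] at hcc
    rw [← hy1] at hcc
    have := φ.toEquiv.injective hcc
    simp at this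

end fixlemmas

section action
variable {m : ℕ} [hm : Fact (2 ≤ m)]
open SimpleGraph

lemma fix_step (φ : (X m) ≃g (X m)) (i : ZMod (2*m)) (h0 : φ (A0 m i) = A0 m i) :
    φ (A0 m (i+1)) = A0 m (i+1) := by
  have hzb1 := fix_zb1 φ i h0
  have hz1 := fix_z1 φ i h0 hzb1
  have hzb2 := fix_zb2 φ i h0 hzb1 hz1
  exact fix_x1 φ i h0 hzb2

lemma fix_inl (φ : (X m) ≃g (X m)) (h0 : φ (A0 m 0) = A0 m 0) :
    ∀ v : QuaternionGroup m × Bool, φ (Sum.inl v) = Sum.inl v := by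
  haveI : NeZero (2*m) := ⟨by have := hm.out; omega⟩
  have hA : ∀ k : ℕ, φ (A0 m (k : ZMod (2*m))) = A0 m (k : ZMod (2*m)) := by
    intro k
    induction k with
    | zero => simpa using h0
    | succ n ih =>
        have hstep := fix_step φ _ ih
        have hcast : ((n+1 : ℕ) : ZMod (2*m)) = (n : ZMod (2*m)) + 1 := by push_cast; ring
        rw [hcast]; exact hstep
  have hAz : ∀ i : ZMod (2*m), φ (A0 m i) = A0 m i := by
    intro i
    obtain ⟨k, rfl⟩ := ZMod.natCast_zmod_surjective i
    exact hA k
  rintro ⟨(j | j), _ | _⟩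
  · exact hAz j
  · exact fix_z1 φ j (hAz j) (fix_zb1 φ j (hAz j))
  · have hzb1 := fix_zb1 φ (-j) (hAz (-j))
    have hz1 := fix_z1 φ (-j) (hAz (-j)) hzb1
    have hw4 := fix_w4 φ (-j) hzb1 hz1
    have h := fix_y1 φ (-j) (hAz (-j)) hzb1 hw4
    rw [neg_neg] at h; exact h
  · have h := fix_zb1 φ (-j) (hAz (-j))
    rw [neg_neg] at h; exact h

lemma deg1_shape (v : V m) (h : (X m).degree v = 1) : ∃ e, v = Gd m 0 e := by
  rcases v with ⟨(j | j), _|_⟩ | ⟨p, e⟩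
  · rw [show (Sum.inl (a j, false) : V m) = A0 m j from rfl, deg_A0] at h; omega
  · rw [show (Sum.inl (a j, true) : V m) = A1 m j from rfl, deg_A1] at h; omega
  · rw [show (Sum.inl (xa j, false) : V m) = B0 m j from rfl, deg_B0] at h; omega
  · rw [show (Sum.inl (xa j, true) : V m) = B1 m j from rfl, deg_B1] at h; omega
  · have hp : ∀ q : Fin 3, q = 0 ∨ q = 1 ∨ q = 2 := by decide
    rcases hp p with rfl | rfl | rfl
    · exact ⟨e, rfl⟩
    · rw [show (Sum.inr ((1 : Fin 3), e) : V m) = Gd m 1 e from rfl, deg_Gd1] at h; omega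
    · rw [show (Sum.inr ((2 : Fin 3), e) : V m) = Gd m 2 e from rfl, deg_Gd2] at h; omega

lemma deg2_shape (v : V m) (h : (X m).degree v = 2) : ∃ e, v = Gd m 1 e := by
  rcases v with ⟨(j | j), _|_⟩ | ⟨p, e⟩
  · rw [show (Sum.inl (a j, false) : V m) = A0 m j from rfl, deg_A0] at h; omega
  · rw [show (Sum.inl (a j, true) : V m) = A1 m j from rfl, deg_A1] at h; omega
  · rw [show (Sum.inl (xa j, false) : V m) = B0 m j from rfl, deg_B0] at h; omega
  · rw [show (Sum.inl (xa j, true) : V m) = B1 m j from rfl, deg_B1] at h; omega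
  · have hp : ∀ q : Fin 3, q = 0 ∨ q = 1 ∨ q = 2 := by decide
    rcases hp p with rfl | rfl | rfl
    · rw [show (Sum.inr ((0 : Fin 3), e) : V m) = Gd m 0 e from rfl, deg_Gd0] at h; omega
    · exact ⟨e, rfl⟩
    · rw [show (Sum.inr ((2 : Fin 3), e) : V m) = Gd m 2 e from rfl, deg_Gd2] at h; omega

lemma deg3_shape (v : V m) (h : (X m).degree v = 3) : ∃ e, v = Gd m 2 e := by
  rcases v with ⟨(j | j), _|_⟩ | ⟨p, e⟩
  · rw [show (Sum.inl (a j, false) : V m) = A0 m j from rfl, deg_A0] at h; omega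
  · rw [show (Sum.inl (a j, true) : V m) = A1 m j from rfl, deg_A1] at h; omega
  · rw [show (Sum.inl (xa j, false) : V m) = B0 m j from rfl, deg_B0] at h; omega
  · rw [show (Sum.inl (xa j, true) : V m) = B1 m j from rfl, deg_B1] at h; omega
  · have hp : ∀ q : Fin 3, q = 0 ∨ q = 1 ∨ q = 2 := by decide
    rcases hp p with rfl | rfl | rfl
    · rw [show (Sum.inr ((0 : Fin 3), e) : V m) = Gd m 0 e from rfl, deg_Gd0] at h; omega
    · rw [show (Sum.inr ((1 : Fin 3), e) : V m) = Gd m 1 e from rfl, deg_Gd1] at h; omega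
    · exact ⟨e, rfl⟩

/-! ### The action of `Q × C₂³` -/

def cmap (c : Multiplicative (ZMod 2 × ZMod 2 × ZMod 2)) : Fin 3 → ZMod 2 :=
  fun p => if p = 0 then (Multiplicative.toAdd c).1
    else if p = 1 then (Multiplicative.toAdd c).2.1 else (Multiplicative.toAdd c).2.2

def act (q : QuaternionGroup m) (c : Fin 3 → ZMod 2) : V m → V m
  | .inl (g, l) => .inl (q * g, l)
  | .inr (p, e) => .inr (p, e + c p)

lemma z2add (x : ZMod 2) : x + x = 0 := by revert x; decide

lemma act_act (q q' : QuaternionGroup m) (c c' : Fin 3 → ZMod 2) (v : V m) :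
    act q c (act q' c' v) = act (q * q') (fun p => c' p + c p) v := by
  rcases v with ⟨g, l⟩ | ⟨p, e⟩
  · simp only [act, mul_assoc]
  · simp only [act, Sum.inr.injEq, Prod.mk.injEq, true_and]; ring

lemma act_adj (q : QuaternionGroup m) (c : Fin 3 → ZMod 2) (v w : V m)
    (h : (X m).Adj v w) : (X m).Adj (act q c v) (act q c w) := by
  rcases v with ⟨g, _|_⟩ | ⟨p, e⟩ <;> rcases w with ⟨g', _|_⟩ | ⟨p', e'⟩
  · show S00 m ((q*g)⁻¹ * (q*g'))
    have he : (q*g)⁻¹ * (q*g') = g⁻¹ * g' := by group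
    rw [he]; exact h
  · show Tc m ((q*g)⁻¹ * (q*g'))
    have he : (q*g)⁻¹ * (q*g') = g⁻¹ * g' := by group
    rw [he]; exact h
  · exact (h : False).elim
  · show Tc m ((q*g')⁻¹ * (q*g))
    have he : (q*g')⁻¹ * (q*g) = g'⁻¹ * g := by group
    rw [he]; exact h
  · show S11 m ((q*g)⁻¹ * (q*g'))
    have he : (q*g)⁻¹ * (q*g') = g⁻¹ * g' := by group
    rw [he]; exact h
  · exact (h : False).elim
  · exact (h : False).elim
  · exact (h : False).elim
  · show (p = p' ∧ e + c p ≠ e' + c p' ∧ p ≠ 1) ∨ (p ≠ p' ∧ p ≠ 0 ∧ p' ≠ 0)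
    rcases h with ⟨h1, h2, h3⟩ | hh
    · subst h1
      exact Or.inl ⟨rfl, fun hcl => h2 (by exact add_right_cancel hcl), h3⟩
    · exact Or.inr hh

def actEquiv (q : QuaternionGroup m) (c : Fin 3 → ZMod 2) : V m ≃ V m where
  toFun := act q c
  invFun := act q⁻¹ c
  left_inv v := by
    rw [act_act]
    rcases v with ⟨g, l⟩ | ⟨p, e⟩
    · simp [act]
    · simp [act, z2add]
  right_inv v := by
    rw [act_act]
    rcases v with ⟨g, l⟩ | ⟨p, e⟩
    · simp [act]
    · simp [act, z2add]

def ρiso (q : QuaternionGroup m) (c : Fin 3 → ZMod 2) : (X m) ≃g (X m) where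
  toEquiv := actEquiv q c
  map_rel_iff' := by
    intro v w
    constructor
    · intro h
      have h2 := act_adj q⁻¹ c _ _ h
      rwa [show act q⁻¹ c (actEquiv q c v) = v from (actEquiv q c).left_inv v,
        show act q⁻¹ c (actEquiv q c w) = w from (actEquiv q c).left_inv w] at h2
    · exact act_adj q c v w

lemma ρiso_apply (q : QuaternionGroup m) (c : Fin 3 → ZMod 2) (v : V m) :
    ρiso q c v = act q c v := rfl

def ρ : (QuaternionGroup m × Multiplicative (ZMod 2 × ZMod 2 × ZMod 2)) →*
    ((X m) ≃g (X m)) where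
  toFun u := ρiso u.1 (cmap u.2)
  map_one' := by
    apply RelIso.ext
    intro v
    show act 1 (cmap 1) v = v
    rcases v with ⟨g, l⟩ | ⟨p, e⟩
    · show (Sum.inl (1 * g, l) : V m) = Sum.inl (g, l)
      rw [one_mul]
    · show (Sum.inr (p, e + cmap 1 p) : V m) = Sum.inr (p, e)
      have hc : cmap (1 : Multiplicative (ZMod 2 × ZMod 2 × ZMod 2)) p = 0 := by
        rcases (by decide : ∀ x : Fin 3, x = 0 ∨ x = 1 ∨ x = 2) p with rfl | rfl | rfl <;> rfl
      rw [hc, add_zero]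
  map_mul' u u' := by
    apply RelIso.ext
    intro v
    show act (u.1 * u'.1) (cmap (u.2 * u'.2)) v = act u.1 (cmap u.2) (act u'.1 (cmap u'.2) v)
    rw [act_act]
    rcases v with ⟨g, l⟩ | ⟨p, e⟩
    · rfl
    · simp only [act, Sum.inr.injEq, Prod.mk.injEq, true_and]
      have hc : cmap (u.2 * u'.2) p = cmap u'.2 p + cmap u.2 p := by
        rcases (by decide : ∀ x : Fin 3, x = 0 ∨ x = 1 ∨ x = 2) p with rfl | rfl | rfl <;>
          (simp [cmap, toAdd_mul]; try ring)
      rw [hc]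

end action

section bij
variable {m : ℕ} [hm : Fact (2 ≤ m)]
open SimpleGraph

lemma ρ_inj : Function.Injective (ρ (m := m)) := by
  rw [injective_iff_map_eq_one]
  rintro ⟨q, c⟩ hu
  have h1 : (ρ (m := m) (q, c)) (A0 m 0) = A0 m 0 := by rw [hu]; rfl
  have hq : q = 1 := by
    have h2 : (Sum.inl (q * a 0, false) : V m) = Sum.inl (a 0, false) := h1
    simp only [Sum.inl.injEq, Prod.mk.injEq, and_true] at h2
    rw [← QuaternionGroup.one_def, mul_one] at h2
    exact h2
  have hcp : ∀ p : Fin 3, cmap c p = 0 := by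
    intro p
    have h3 : (ρ (m := m) (q, c)) (Gd m p 0) = Gd m p 0 := by rw [hu]; rfl
    have h4 : (Sum.inr (p, 0 + cmap c p) : V m) = Sum.inr (p, 0) := h3
    simp only [Sum.inr.injEq, Prod.mk.injEq, true_and, zero_add] at h4
    exact h4
  have hc : c = 1 := by
    have h0 := hcp 0
    have h1' := hcp 1
    have h2' := hcp 2
    simp only [cmap, if_pos, if_neg, reduceIte] at h0 h1' h2'
    have htA : Multiplicative.toAdd c = (0 : ZMod 2 × ZMod 2 × ZMod 2) := by
      refine Prod.ext h0 (Prod.ext h1' h2')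
    have := congrArg (Multiplicative.ofAdd) htA
    simpa using this
  rw [hq, hc]; rfl

lemma ρ_surj : Function.Surjective (ρ (m := m)) := by
  intro φ
  have hdeg : (X m).degree (φ (A0 m 0)) = 7 := by rw [deg_transport]; exact deg_A0 m _
  obtain ⟨h, hh⟩ : ∃ g0 : QuaternionGroup m, φ (A0 m 0) = Sum.inl (g0, false) := by
    rcases deg7_shape _ hdeg with ⟨c, hcc⟩ | ⟨c, hcc⟩
    · exact ⟨a c, hcc⟩
    · exact ⟨xa c, hcc⟩
  set ψ : (X m) ≃g (X m) := (ρ (m := m) (h, 1))⁻¹ * φ with hψdef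
  have hψ0 : ψ (A0 m 0) = A0 m 0 := by
    show (ρ (m := m) (h, 1))⁻¹ (φ (A0 m 0)) = A0 m 0
    rw [hh, ← map_inv]
    show (Sum.inl ((h,(1:Multiplicative (ZMod 2 × ZMod 2 × ZMod 2))).1⁻¹ * h, false) : V m)
      = A0 m 0
    show (Sum.inl (h⁻¹ * h, false) : V m) = A0 m 0
    rw [inv_mul_cancel, QuaternionGroup.one_def]
    rfl
  have hfix := fix_inl ψ hψ0
  have key : ∀ p : Fin 3, ∃ cp : ZMod 2,
      ψ (Gd m p 0) = Gd m p cp ∧ ψ (Gd m p 1) = Gd m p (1 + cp) := by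
    have main : ∀ (p : Fin 3) (e0 e1' : ZMod 2), ψ (Gd m p 0) = Gd m p e0 →
        ψ (Gd m p 1) = Gd m p e1' →
        ∃ cp : ZMod 2, ψ (Gd m p 0) = Gd m p cp ∧ ψ (Gd m p 1) = Gd m p (1 + cp) := by
      intro p e0 e1' he0 he1
      refine ⟨e0, he0, ?_⟩
      have hne : e1' ≠ e0 := by
        intro hcl
        have heq : ψ (Gd m p 1) = ψ (Gd m p 0) := by rw [he0, he1, hcl]
        have h2 := ψ.toEquiv.injective heq
        rw [Gd_eq_Gd] at h2
        exact absurd h2.2 (by decide)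
      rw [he1, Gd_eq_Gd]
      exact ⟨rfl, by rw [(zmod2_ne_iff e0 e1').mp (Ne.symm hne)]; ring⟩
    intro p
    rcases (by decide : ∀ x : Fin 3, x = 0 ∨ x = 1 ∨ x = 2) p with rfl | rfl | rfl
    · have d0 : (X m).degree (ψ (Gd m 0 0)) = 1 := by rw [deg_transport]; exact deg_Gd0 m _
      have d1 : (X m).degree (ψ (Gd m 0 1)) = 1 := by rw [deg_transport]; exact deg_Gd0 m _
      obtain ⟨e0, he0⟩ := deg1_shape _ d0
      obtain ⟨e1', he1⟩ := deg1_shape _ d1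
      exact main 0 e0 e1' he0 he1
    · have d0 : (X m).degree (ψ (Gd m 1 0)) = 2 := by rw [deg_transport]; exact deg_Gd1 m _
      have d1 : (X m).degree (ψ (Gd m 1 1)) = 2 := by rw [deg_transport]; exact deg_Gd1 m _
      obtain ⟨e0, he0⟩ := deg2_shape _ d0
      obtain ⟨e1', he1⟩ := deg2_shape _ d1
      exact main 1 e0 e1' he0 he1
    · have d0 : (X m).degree (ψ (Gd m 2 0)) = 3 := by rw [deg_transport]; exact deg_Gd2 m _
      have d1 : (X m).degree (ψ (Gd m 2 1)) = 3 := by rw [deg_transport]; exact deg_Gd2 m _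
      obtain ⟨e0, he0⟩ := deg3_shape _ d0
      obtain ⟨e1', he1⟩ := deg3_shape _ d1
      exact main 2 e0 e1' he0 he1
  obtain ⟨c0, hc00, hc01⟩ := key 0
  obtain ⟨c1, hc10, hc11⟩ := key 1
  obtain ⟨c2, hc20, hc21⟩ := key 2
  have hψeq : ψ = ρ (m := m) (1, Multiplicative.ofAdd (c0, c1, c2)) := by
    apply RelIso.ext
    intro v
    rcases v with ⟨g, l⟩ | ⟨p, e⟩
    · rw [hfix (g, l)]
      show (Sum.inl (g, l) : V m) = Sum.inl (1 * g, l)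
      rw [one_mul]
    · rcases (by decide : ∀ x : ZMod 2, x = 0 ∨ x = 1) e with rfl | rfl <;>
        rcases (by decide : ∀ x : Fin 3, x = 0 ∨ x = 1 ∨ x = 2) p with rfl | rfl | rfl
      · rw [show (Sum.inr ((0:Fin 3), (0:ZMod 2)) : V m) = Gd m 0 0 from rfl, hc00]
        show Gd m 0 c0 = Sum.inr (0, 0 + c0); rw [zero_add]; rfl
      · rw [show (Sum.inr ((1:Fin 3), (0:ZMod 2)) : V m) = Gd m 1 0 from rfl, hc10]
        show Gd m 1 c1 = Sum.inr (1, 0 + c1); rw [zero_add]; rfl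
      · rw [show (Sum.inr ((2:Fin 3), (0:ZMod 2)) : V m) = Gd m 2 0 from rfl, hc20]
        show Gd m 2 c2 = Sum.inr (2, 0 + c2); rw [zero_add]; rfl
      · rw [show (Sum.inr ((0:Fin 3), (1:ZMod 2)) : V m) = Gd m 0 1 from rfl, hc01]
        show Gd m 0 (1 + c0) = Sum.inr (0, 1 + c0); rfl
      · rw [show (Sum.inr ((1:Fin 3), (1:ZMod 2)) : V m) = Gd m 1 1 from rfl, hc11]
        show Gd m 1 (1 + c1) = Sum.inr (1, 1 + c1); rfl
      · rw [show (Sum.inr ((2:Fin 3), (1:ZMod 2)) : V m) = Gd m 2 1 from rfl, hc21]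
        show Gd m 2 (1 + c2) = Sum.inr (2, 1 + c2); rfl
  refine ⟨((h, 1) : _ × _) * (1, Multiplicative.ofAdd (c0, c1, c2)), ?_⟩
  rw [map_mul, ← hψeq, hψdef, ← mul_assoc, mul_inv_cancel, one_mul]

noncomputable def autEquiv : ((X m) ≃g (X m)) ≃*
    (QuaternionGroup m × Multiplicative (ZMod 2 × ZMod 2 × ZMod 2)) :=
  (MulEquiv.ofBijective (ρ (m := m)) ⟨ρ_inj, ρ_surj⟩).symm

end bij

section assemble
open SimpleGraph

variable (m : ℕ) [hm : Fact (2 ≤ m)]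

lemma cardV : Fintype.card (V m) = 8 * m + 6 := by
  haveI : NeZero m := ⟨by have := hm.out; omega⟩
  have h1 : Fintype.card (V m) =
      Fintype.card (QuaternionGroup m) * 2 + 3 * 2 := by
    simp [Fintype.card_sum, Fintype.card_prod, ZMod.card]
  rw [h1, QuaternionGroup.card]
  ring

/-- Transporting the automorphism group along a graph isomorphism. -/
def graphAutCongr {α β : Type*} {G : SimpleGraph α} {H : SimpleGraph β} (e : G ≃g H) :
    (G ≃g G) ≃* (H ≃g H) where
  toFun f := (e.symm.trans f).trans e
  invFun f := (e.trans f).trans e.symm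
  left_inv f := RelIso.ext fun x => by
    show e.symm (e (f (e.symm (e x)))) = f x
    rw [e.symm_apply_apply, e.symm_apply_apply]
  right_inv f := RelIso.ext fun x => by
    show e (e.symm (f (e (e.symm x)))) = f x
    rw [e.apply_symm_apply, e.apply_symm_apply]
  map_mul' f g := RelIso.ext fun x => by
    show e ((f * g) (e.symm x)) = e (f (e.symm (e (g (e.symm x)))))
    rw [e.symm_apply_apply]
    rfl

noncomputable def vEquiv : V m ≃ Fin (8*m+6) :=
  (Fintype.equivFin (V m)).trans (finCongr (cardV m))

noncomputable def Γfin : SimpleGraph (Fin (8*m+6)) :=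
  (X m).comap ((vEquiv m).symm : Fin (8*m+6) → V m)

noncomputable def XΓiso : (X m) ≃g (Γfin m) where
  toEquiv := vEquiv m
  map_rel_iff' := by
    intro v w
    show (X m).Adj ((vEquiv m).symm ((vEquiv m) v)) ((vEquiv m).symm ((vEquiv m) w)) ↔ _
    rw [Equiv.symm_apply_apply, Equiv.symm_apply_apply]

noncomputable def finAutEquiv : ((Γfin m) ≃g (Γfin m)) ≃*
    (QuaternionGroup m × Multiplicative (ZMod 2 × ZMod 2 × ZMod 2)) :=
  ((graphAutCongr (XΓiso m)).symm).trans (autEquiv (m := m))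

end assemble
end QCWork

lemma QC_alpha_le (m : ℕ) [Fact (2 ≤ m)] :
    graphAlpha (QuaternionGroup m × Multiplicative (ZMod 2 × ZMod 2 × ZMod 2)) ≤ 8*m+6 :=
  Nat.sInf_le ⟨QCWork.Γfin m, ⟨QCWork.finAutEquiv m⟩⟩

/-- For `r ≥ 3`, the group `G = Q_{2^r} × C₂ × C₂ × C₂` satisfies
`α(G) ≤ 2^(r+1) + 6`; in particular `α(G) ≤ |G| = 2^(r+3)`. Here
`Q_{2^r} = QuaternionGroup (2 ^ (r - 2))`. -/
theorem alpha_quaternion_times_elementary_abelian (r : ℕ) (hr : 3 ≤ r) :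
    graphAlpha (QuaternionGroup (2 ^ (r - 2)) ×
        Multiplicative (ZMod 2 × ZMod 2 × ZMod 2)) ≤ 2 ^ (r + 1) + 6 ∧
    Nat.card (QuaternionGroup (2 ^ (r - 2)) ×
        Multiplicative (ZMod 2 × ZMod 2 × ZMod 2)) = 2 ^ (r + 3) ∧
    graphAlpha (QuaternionGroup (2 ^ (r - 2)) ×
        Multiplicative (ZMod 2 × ZMod 2 × ZMod 2)) ≤
      Nat.card (QuaternionGroup (2 ^ (r - 2)) ×
        Multiplicative (ZMod 2 × ZMod 2 × ZMod 2)) := by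
  have hm2 : 2 ≤ 2 ^ (r - 2) := by
    calc 2 = 2^1 := by norm_num
    _ ≤ 2^(r-2) := Nat.pow_le_pow_right (by norm_num) (by omega)
  haveI : Fact (2 ≤ 2 ^ (r - 2)) := ⟨hm2⟩
  haveI : NeZero (2 ^ (r - 2)) := ⟨by omega⟩
  have hbound := QC_alpha_le (2 ^ (r - 2))
  have hm8 : 8 * 2 ^ (r - 2) + 6 = 2 ^ (r + 1) + 6 := by
    have h : (2:ℕ) ^ (r + 1) = 2 ^ ((r - 2) + 3) := by congr 1; omega
    rw [h, pow_add]
    ring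
  have hcard : Nat.card (QuaternionGroup (2 ^ (r - 2)) ×
      Multiplicative (ZMod 2 × ZMod 2 × ZMod 2)) = 2 ^ (r + 3) := by
    rw [Nat.card_prod, Nat.card_eq_fintype_card, QuaternionGroup.card]
    have h8 : Nat.card (Multiplicative (ZMod 2 × ZMod 2 × ZMod 2)) = 8 := by
      rw [Nat.card_congr Multiplicative.toAdd, Nat.card_prod, Nat.card_prod,
        Nat.card_zmod]
    rw [h8]
    have h : (2:ℕ) ^ (r + 3) = 2 ^ ((r - 2) + 5) := by congr 1; omega
    rw [h, pow_add]
    ring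
  refine ⟨by rw [← hm8]; exact hbound, hcard, ?_⟩
  rw [hcard]
  have h1 : (2:ℕ) ≤ 2 ^ (r+1) := by
    calc 2 = 2^1 := by norm_num
    _ ≤ 2^(r+1) := Nat.pow_le_pow_right (by norm_num) (by omega)
  have h2 : (2:ℕ) ^ (r + 3) = 4 * 2 ^ (r + 1) := by
    have h : r + 3 = (r + 1) + 2 := by omega
    rw [h, pow_add]
    ring
  have h3 := hbound
  rw [hm8] at h3
  omega
end

section
/- Let q be an odd prime or q = 1, let r ≥ 1, and let G be the dicyclic group of order 2^{r+1} q (so G = Dic_{2^{r-1} q}). Let Γ be a finite simple graph whose automorphism group is isomorphic to G, and let G act on the vertex set V(Γ) via a fixed isomorphism G ≅ Aut(Γ). If every orbit of this action has size at most max{2^{r+1}, 2^r q}, then there exist at least two distinct orbits of size exactly 2^{r+1}. -/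
/-- The orbit of a vertex `v` under the action of `G` on the vertices of `Γ`
induced by an isomorphism `e : G ≃* Aut(Γ)`. -/
def autOrbit {G V : Type*} [Group G] {Γ : SimpleGraph V}
    (e : G ≃* (Γ ≃g Γ)) (v : V) : Set V :=
  Set.range fun g : G => e g v

namespace DicyclicProofAux

open QuaternionGroup

variable {n : ℕ}

lemma nn_zero : ((n : ZMod (2*n)) + n = 0) := by
  have h : ((2 * n : ℕ) : ZMod (2 * n)) = 0 := ZMod.natCast_self _
  push_cast at h
  linear_combination h

lemma neg_n : (-(n : ZMod (2*n)) = n) := by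
  have := nn_zero (n := n)
  linear_combination -this

lemma z_central (g : QuaternionGroup n) : g * a n = a n * g := by
  rcases g with i | i
  · simp [add_comm]
  · simp [sub_eq_add_neg, neg_n]

lemma z_sq : (a n : QuaternionGroup n) * a n = 1 := by
  rw [a_mul_a, nn_zero, a_zero]

lemma xa_mul_self (i : ZMod (2*n)) : xa i * xa i = (a n : QuaternionGroup n) := by
  simp

lemma z_ne_one [NeZero n] : (a n : QuaternionGroup n) ≠ 1 := by
  rw [one_def]
  intro h
  injection h with h'
  rw [ZMod.natCast_eq_zero_iff] at h'
  have := Nat.le_of_dvd (NeZero.pos n) h'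
  have := NeZero.pos n
  omega

lemma sq_one_classify [NeZero n] {g : QuaternionGroup n} (h : g * g = 1) (h1 : g ≠ 1) :
    g = a n := by
  rcases g with i | i
  · rw [a_mul_a, one_def] at h
    injection h with h'
    have hval : ((i.val + i.val : ℕ) : ZMod (2*n)) = 0 := by
      push_cast [ZMod.natCast_zmod_val]
      exact h'
    rw [ZMod.natCast_eq_zero_iff] at hval
    have hlt : i.val < 2 * n := ZMod.val_lt i
    have hne : i.val ≠ 0 := by
      intro h0
      apply h1
      rw [one_def, ← ZMod.natCast_zmod_val i, h0, Nat.cast_zero]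
    have : i.val = n := by
      rcases hval with ⟨c, hc⟩
      have hn := NeZero.pos n
      have hc2 : c < 2 := by
        by_contra hc2
        push_neg at hc2
        have : 2 * n * 2 ≤ 2 * n * c := Nat.mul_le_mul_left _ hc2
        omega
      interval_cases c <;> omega
    rw [← ZMod.natCast_zmod_val i, this]
  · exfalso
    rw [xa_mul_self] at h
    exact z_ne_one h

lemma key {n : ℕ} [NeZero n] {V : Type*} {Γ : SimpleGraph V}
    (e : QuaternionGroup n ≃* (Γ ≃g Γ)) (v₀ : V)
    (hv₀ : e (a n) v₀ ≠ v₀)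
    (hall : ∀ w : V, e (a n) w ≠ w → w ∈ autOrbit e v₀) : False := by
  classical
  set z : QuaternionGroup n := a n with hzdef
  have hmul : ∀ (g h : QuaternionGroup n) (v : V), e (g * h) v = e g (e h v) := by
    intro g h v; rw [map_mul]; rfl
  have hone : ∀ v : V, e 1 v = v := by intro v; rw [map_one]; rfl
  set X : Set V := {w | ∃ i, e (xa i) v₀ = w} with hXdef
  have hzX : ∀ w ∈ X, e z w ∈ X := by
    rintro w ⟨i, rfl⟩
    refine ⟨i - n, ?_⟩
    rw [← hmul, hzdef, a_mul_xa]
  have hzz : ∀ w : V, e z (e z w) = w := by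
    intro w; rw [← hmul, z_sq, hone]
  set σ : V → V := fun w => if w ∈ X then e z w else w with hσdef
  have hσinv : Function.Involutive σ := by
    intro w
    by_cases hw : w ∈ X
    · simp only [hσdef, if_pos hw, if_pos (hzX w hw)]
      exact hzz w
    · simp only [hσdef, if_neg hw]
  have hA : ∀ w₁ ∈ X, ∀ w₂ ∉ X, Γ.Adj w₁ w₂ → Γ.Adj (e z w₁) w₂ := by
    rintro w₁ ⟨i, rfl⟩ w₂ hw₂ hadj
    by_cases hw₂O : w₂ ∈ autOrbit e v₀
    · obtain ⟨g, hg⟩ := hw₂O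
      replace hg : e g v₀ = w₂ := hg
      rcases g with j | j
      · -- w₂ = e (a j) v₀
        set U : QuaternionGroup n := xa i with hU
        set W : QuaternionGroup n := QuaternionGroup.a j with hW
        set s : QuaternionGroup n := W⁻¹ * U with hs
        have hsxa : s = xa (i + j) := by
          rw [hs, hU, hW]
          show (QuaternionGroup.a j)⁻¹ * xa i = xa (i + j)
          have : (QuaternionGroup.a j)⁻¹ = QuaternionGroup.a (-j) := rfl
          rw [this, a_mul_xa, sub_neg_eq_add]
        have hss : s * s = z := by rw [hsxa]; exact xa_mul_self _
        have hUW : U = W * s := by rw [hs]; group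
        have hsinv : s⁻¹ = z * s := by
          refine inv_eq_of_mul_eq_one_right ?_
          rw [← z_central s, ← mul_assoc, hss, hzdef]
          exact z_sq
        set φ : QuaternionGroup n := W * s⁻¹ * W⁻¹ with hφ
        have hφU : φ * U = W := by rw [hφ, hUW]; group
        have hφW : φ * W = z * U := by
          have h5 : φ * W = W * s⁻¹ := by rw [hφ]; group
          rw [h5, hsinv, ← mul_assoc, z_central W, mul_assoc, ← hUW]
        have h2 : Γ.Adj (e φ (e U v₀)) (e φ (e W v₀)) := by
          rw [hg]; exact (e φ).map_adj_iff.mpr hadj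
        rw [← hmul φ U v₀, ← hmul φ W v₀, hφU, hφW, hmul z U v₀, hg] at h2
        exact h2.symm
      · exact absurd ⟨j, hg⟩ hw₂
    · have hfix : e z w₂ = w₂ := by
        by_contra h
        exact hw₂O (hall w₂ h)
      have h2 : Γ.Adj (e z (e (xa i) v₀)) (e z w₂) := (e z).map_adj_iff.mpr hadj
      rwa [hfix] at h2
  have hadj2 : ∀ u w : V, Γ.Adj u w → Γ.Adj (σ u) (σ w) := by
    intro u w hadj
    by_cases hu : u ∈ X <;> by_cases hw : w ∈ X <;>
      simp only [hσdef, if_pos, if_neg, hu, hw, if_true, if_false]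
    · exact (e z).map_adj_iff.mpr hadj
    · exact hA u hu w hw hadj
    · exact (hA w hw u hu hadj.symm).symm
    · exact hadj
  set σiso : Γ ≃g Γ := ⟨Function.Involutive.toPerm σ hσinv, by
    intro u w
    constructor
    · intro h
      have h' : Γ.Adj (σ u) (σ w) := h
      have := hadj2 _ _ h'
      rwa [hσinv u, hσinv w] at this
    · exact hadj2 u w⟩ with hσiso
  have hσcoe : ∀ w : V, σiso w = σ w := fun _ => rfl
  set g₀ : QuaternionGroup n := e.symm σiso with hg₀
  have he : ∀ w : V, e g₀ w = σ w := by
    intro w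
    rw [hg₀, e.apply_symm_apply]
    exact hσcoe w
  have hv₀X : v₀ ∉ X := by
    rintro ⟨i, hi⟩
    apply hv₀
    calc e z v₀ = e (xa i * xa i) v₀ := by rw [xa_mul_self]
      _ = e (xa i) (e (xa i) v₀) := hmul _ _ _
      _ = v₀ := by rw [hi, hi]
  have hσv₀ : e g₀ v₀ = v₀ := by rw [he, hσdef]; simp only [if_neg hv₀X]
  have hu₁X : e (xa 0) v₀ ∈ X := ⟨0, rfl⟩
  have h1 : e g₀ (e (xa 0) v₀) = e z (e (xa 0) v₀) := by
    rw [he, hσdef]; simp only [if_pos hu₁X]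
  rcases g₀ with k | k
  · -- a k
    have h2 : e (QuaternionGroup.a k * xa 0) v₀ = e (z * xa 0) v₀ := by
      rw [hmul, hmul]; exact h1
    have h3 : e (xa (-k)) v₀ = e (xa n) v₀ := by
      have e1 : QuaternionGroup.a k * xa 0 = xa (-k) := by rw [a_mul_xa, zero_sub]
      have e2 : z * xa 0 = xa n := by
        rw [hzdef, a_mul_xa, zero_sub, neg_n]
      rwa [e1, e2] at h2
    have h4 : e (xa 0 * xa (-k)) v₀ = e (xa 0 * xa n) v₀ := by
      rw [hmul, hmul, h3]
    have e3 : (xa 0 : QuaternionGroup n) * xa (-k) =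
        QuaternionGroup.a ((n : ZMod (2*n)) - k) := by
      rw [xa_mul_xa]; congr 1; ring
    have e4 : (xa 0 : QuaternionGroup n) * xa n = QuaternionGroup.a 0 := by
      rw [xa_mul_xa]; congr 1
      rw [sub_zero]
      exact nn_zero
    rw [e3, e4] at h4
    have h5 : e (QuaternionGroup.a ((n : ZMod (2*n)) - k)) v₀ = v₀ := by
      rw [h4, ← one_def, map_one]
      rfl
    apply hv₀
    calc e z v₀
        = e (QuaternionGroup.a ((n : ZMod (2*n)) - k) * QuaternionGroup.a k) v₀ := by
          rw [a_mul_a, hzdef]; congr 2; ring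
      _ = e (QuaternionGroup.a ((n : ZMod (2*n)) - k)) (e (QuaternionGroup.a k) v₀) :=
          hmul _ _ _
      _ = e (QuaternionGroup.a ((n : ZMod (2*n)) - k)) v₀ := by rw [hσv₀]
      _ = v₀ := h5
  · exact hv₀X ⟨k, hσv₀⟩

def permHom {V : Type*} {Γ : SimpleGraph V} : (Γ ≃g Γ) →* Equiv.Perm V where
  toFun f := f.toEquiv
  map_one' := rfl
  map_mul' _ _ := rfl

lemma orbit_card {q r n : ℕ} (hq : (q.Prime ∧ Odd q) ∨ q = 1) (hr : 1 ≤ r)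
    (hn : n = 2^(r-1)*q)
    {V : Type*} [Fintype V] {Γ : SimpleGraph V}
    (e : QuaternionGroup n ≃* (Γ ≃g Γ)) (v : V)
    (hbound : Nat.card (autOrbit e v) ≤ max (2^(r+1)) (2^r * q))
    (hzv : e (a (n : ZMod (2*n))) v ≠ v)
    (hclassify : ∀ g : QuaternionGroup n, g * g = 1 → g ≠ 1 →
      g = a (n : ZMod (2*n))) :
    Nat.card (autOrbit e v) = 2^(r+1) := by
  classical
  have hq1 : 1 ≤ q := by rcases hq with ⟨hp, _⟩ | rfl; exacts [hp.one_lt.le.trans' (by norm_num), le_refl 1]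
  haveI : NeZero n := ⟨by rw [hn]; positivity⟩
  letI act : MulAction (QuaternionGroup n) V := MulAction.compHom V (permHom.comp e.toMonoidHom)
  have horb_eq : autOrbit e v = MulAction.orbit (QuaternionGroup n) v := rfl
  set stab := MulAction.stabilizer (QuaternionGroup n) v with hstab
  have hcard : Nat.card (autOrbit e v) * Nat.card stab = Nat.card (QuaternionGroup n) := by
    rw [horb_eq, Nat.card_congr (MulAction.orbitEquivQuotientStabilizer (QuaternionGroup n) v)]
    exact (Subgroup.card_eq_card_quotient_mul_card_subgroup _).symm
  have hG : Nat.card (QuaternionGroup n) = 2^(r+1) * q := by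
    rw [Nat.card_eq_fintype_card, QuaternionGroup.card, hn]
    rw [← mul_assoc]
    congr 1
    have : r + 1 = 2 + (r - 1) := by omega
    rw [this, pow_add]
    norm_num
  have hzst : (a (n : ZMod (2*n)) : QuaternionGroup n) ∉ stab := by
    intro h
    rw [hstab, MulAction.mem_stabilizer_iff] at h
    exact hzv h
  have hodd : ¬ 2 ∣ Nat.card stab := by
    intro h2
    haveI : Fintype ↥stab := Fintype.ofFinite _
    rw [Nat.card_eq_fintype_card] at h2
    haveI : Fact (Nat.Prime 2) := ⟨Nat.prime_two⟩
    obtain ⟨x, hx⟩ := exists_prime_orderOf_dvd_card 2 h2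
    have hx2 : (x : QuaternionGroup n) * (x : QuaternionGroup n) = 1 := by
      have := pow_orderOf_eq_one x
      rw [hx] at this
      have : ((x ^ 2 : ↥stab) : QuaternionGroup n) = 1 := by rw [this]; rfl
      rwa [pow_two] at this
    have hx1 : (x : QuaternionGroup n) ≠ 1 := by
      intro h1
      have : x = 1 := Subtype.ext h1
      rw [this, orderOf_one] at hx
      norm_num at hx
    have := hclassify _ hx2 hx1
    exact hzst (this ▸ x.2)
  have hdvd : Nat.card stab ∣ 2^(r+1) * q := by
    rw [← hG, ← hcard]; exact dvd_mul_left _ _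
  have hcop : Nat.Coprime (Nat.card stab) (2^(r+1)) :=
    Nat.Coprime.pow_right _ (((Nat.prime_two.coprime_iff_not_dvd).mpr hodd).symm)
  have hdvdq : Nat.card stab ∣ q := hcop.dvd_of_dvd_mul_left hdvd
  rcases hq with ⟨hp, hoddq⟩ | rfl
  · rcases (Nat.Prime.eq_one_or_self_of_dvd hp _ hdvdq) with h1 | hqq
    · exfalso
      rw [h1, mul_one, hG] at hcard
      have hP : 0 < 2^r := Nat.pow_pos (by norm_num)
      have hq3 : 3 ≤ q := by
        rcases hoddq with ⟨m, hm⟩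
        have := hp.two_le
        omega
      have h2 : (2:ℕ)^(r+1) = 2 * 2^r := by rw [pow_succ, mul_comm]
      rw [hcard, h2] at hbound
      have hlt : (2 * 2^r) ⊔ (2^r * q) < 2 * 2^r * q := by
        apply max_lt <;> nlinarith
      exact absurd hbound (not_le.mpr hlt)
    · rw [hqq, hG] at hcard
      exact Nat.eq_of_mul_eq_mul_right hp.pos hcard
  · have h1 : Nat.card stab = 1 := Nat.dvd_one.mp hdvdq
    rw [h1, mul_one, hG, mul_one] at hcard
    exact hcard

end DicyclicProofAux

open DicyclicProofAux in
/-- Lemma: let `G` be the dicyclic group of order `2^(r+1) q` (with `q` an odd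
prime or `q = 1`, `r ≥ 1`), realised as `QuaternionGroup (2^(r-1) * q)`, acting
on the vertices of a finite graph `Γ` via an isomorphism `G ≃* Aut(Γ)`. If
every orbit has size at most `max (2^(r+1)) (2^r * q)`, then there are at
least two distinct orbits of size exactly `2^(r+1)`. -/
theorem dicyclic_two_orbits_of_size_pow (q r : ℕ)
    (hq : (q.Prime ∧ Odd q) ∨ q = 1) (hr : 1 ≤ r)
    (V : Type*) [Fintype V] (Γ : SimpleGraph V)
    (e : QuaternionGroup (2 ^ (r - 1) * q) ≃* (Γ ≃g Γ))
    (horb : ∀ v : V, Nat.card (autOrbit e v) ≤ max (2 ^ (r + 1)) (2 ^ r * q)) :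
    ∃ v w : V, autOrbit e v ≠ autOrbit e w ∧
      Nat.card (autOrbit e v) = 2 ^ (r + 1) ∧
      Nat.card (autOrbit e w) = 2 ^ (r + 1) := by
  classical
  have hq1 : 1 ≤ q := by
    rcases hq with ⟨hp, _⟩ | rfl
    exacts [hp.one_lt.le.trans' (by norm_num), le_rfl]
  haveI : NeZero (2 ^ (r - 1) * q) := ⟨by positivity⟩
  have hex : ∃ v : V,
      e (QuaternionGroup.a ((2^(r-1)*q : ℕ) : ZMod (2*(2^(r-1)*q)))) v ≠ v := by
    by_contra h
    push_neg at h
    have h1 : e (QuaternionGroup.a ((2^(r-1)*q : ℕ) : ZMod (2*(2^(r-1)*q)))) = 1 :=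
      RelIso.ext fun x => h x
    have h2 : (QuaternionGroup.a ((2^(r-1)*q : ℕ) : ZMod (2*(2^(r-1)*q)))
        : QuaternionGroup (2^(r-1)*q)) = 1 := e.injective (by rw [h1, map_one])
    exact z_ne_one h2
  obtain ⟨v₀, hv₀⟩ := hex
  have hexw : ∃ w : V,
      e (QuaternionGroup.a ((2^(r-1)*q : ℕ) : ZMod (2*(2^(r-1)*q)))) w ≠ w ∧
      w ∉ autOrbit e v₀ := by
    by_contra h
    push_neg at h
    exact key e v₀ hv₀ h
  obtain ⟨w₀, hw₀, hw₀O⟩ := hexw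
  have hclassify : ∀ g : QuaternionGroup (2^(r-1)*q), g * g = 1 → g ≠ 1 →
      g = QuaternionGroup.a ((2^(r-1)*q : ℕ) : ZMod (2*(2^(r-1)*q))) :=
    fun g hg hg1 => sq_one_classify hg hg1
  refine ⟨v₀, w₀, ?_, orbit_card hq hr rfl e v₀ (horb v₀) hv₀ hclassify,
    orbit_card hq hr rfl e w₀ (horb w₀) hw₀ hclassify⟩
  intro hEq
  apply hw₀O
  rw [hEq]
  exact ⟨1, by simp only [map_one]; rfl⟩
end

section
/- Let q ∈ {3, 5} and let G = Dic_q be the dicyclic group of order 4q. Let Γ be a finite simple graph on at most 4q + 4 vertices whose automorphism group is isomorphic to G, and let G act on the vertex set V(Γ) via a fixed isomorphism G ≅ Aut(Γ). Then no orbit of this action has size 4q = |G|. -/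
namespace DicAux
open QuaternionGroup

variable {n : ℕ}

lemma a_inv (i : ZMod (2*n)) : (a i : QuaternionGroup n)⁻¹ = a (-i) := rfl
lemma xa_inv (i : ZMod (2*n)) : (xa i : QuaternionGroup n)⁻¹ = xa ((n : ZMod (2*n)) + i) := rfl

lemma nn_zero : ((n : ZMod (2*n)) + n) = 0 := by
  have h := ZMod.natCast_self (2*n)
  push_cast at h
  linear_combination h

/-- The Watkins map: identity on `⟨a⟩`, inversion off it. -/
def qsig : QuaternionGroup n → QuaternionGroup n
  | .a i => .a i
  | .xa i => .xa ((n : ZMod (2*n)) + i)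

lemma qsig_a (i : ZMod (2*n)) : qsig (a i : QuaternionGroup n) = a i := rfl
lemma qsig_xa (i : ZMod (2*n)) : qsig (xa i : QuaternionGroup n) = xa ((n : ZMod (2*n)) + i) := rfl

lemma qsig_invol (g : QuaternionGroup n) : qsig (qsig g) = g := by
  rcases g with i | i
  · rfl
  · show xa ((n : ZMod (2*n)) + ((n : ZMod (2*n)) + i)) = xa i
    rw [← add_assoc, nn_zero, zero_add]

lemma qsig_one : qsig (1 : QuaternionGroup n) = 1 := rfl

lemma watkins (g h : QuaternionGroup n) :
    (qsig g)⁻¹ * qsig h = g⁻¹ * h ∨ (qsig g)⁻¹ * qsig h = (g⁻¹ * h)⁻¹ := by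
  have h2 : ((n : ZMod (2*n)) + n) = 0 := nn_zero
  rcases g with i | i <;> rcases h with j | j
  · left; rfl
  · right
    simp only [qsig_a, qsig_xa, a_inv, xa_inv, a_mul_xa, xa_mul_a]
    congr 1; ring
  · right
    simp only [qsig_a, qsig_xa, a_inv, xa_inv, a_mul_xa, xa_mul_a]
    congr 1; ring
  · left
    simp only [qsig_a, qsig_xa, a_inv, xa_inv, xa_mul_xa]
    congr 1; ring

lemma qsig_cases (g : QuaternionGroup n) :
    qsig g = g ∨ qsig g = (a n : QuaternionGroup n) * g := by
  rcases g with i | i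
  · left; rfl
  · right
    simp only [qsig_xa, a_mul_xa]
    congr 1
    linear_combination nn_zero

/-- reduction mod 2 -/
def prj (n : ℕ) : ZMod (2*n) → ZMod 2 := fun i => ZMod.castHom (dvd_mul_right 2 n) (ZMod 2) i

lemma prj_add (i j : ZMod (2*n)) : prj n (i + j) = prj n i + prj n j := by
  simp [prj, map_add]
lemma prj_sub (i j : ZMod (2*n)) : prj n (i - j) = prj n i - prj n j := by
  simp [prj, map_sub]
lemma prj_natCast (m : ℕ) : prj n (m : ZMod (2*n)) = (m : ZMod 2) := by
  simp [prj, map_natCast]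

/-- the quotient map to `G/⟨a²⟩ ≅ ZMod 4` (for odd `n`). -/
def qmu : QuaternionGroup n → ZMod 4
  | .a i => 2 * (((prj n i).val : ℕ) : ZMod 4)
  | .xa i => 2 * (((prj n i).val : ℕ) : ZMod 4) + 1

lemma qmu_mul (hodd : (n : ZMod 2) = 1) (g h : QuaternionGroup n) :
    qmu (g * h) = qmu g + qmu h := by
  rcases g with i | i <;> rcases h with j | j <;>
    simp only [a_mul_a, a_mul_xa, xa_mul_a, xa_mul_xa, qmu, prj_add, prj_sub, prj_natCast, hodd]
  · generalize prj n i = s; generalize prj n j = t; revert s t; decide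
  · generalize prj n i = s; generalize prj n j = t; revert s t; decide
  · generalize prj n i = s; generalize prj n j = t; revert s t; decide
  · generalize prj n i = s; generalize prj n j = t; revert s t; decide

lemma qmu_sig (hodd : (n : ZMod 2) = 1) (g : QuaternionGroup n) :
    qmu (qsig g) = - qmu g := by
  rcases g with i | i <;>
    simp only [qsig_a, qsig_xa, qmu, prj_add, prj_natCast, hodd]
  · generalize prj n i = s; revert s; decide
  · generalize prj n i = s; revert s; decide

lemma qmu_one : qmu (1 : QuaternionGroup n) = 0 := by
  show qmu (a 0 : QuaternionGroup n) = 0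
  simp [qmu, prj]

lemma qmu_b : qmu (xa 0 : QuaternionGroup n) = 1 := by
  simp [qmu, prj]

lemma qmu_pow (hodd : (n : ZMod 2) = 1) (m : ℕ) :
    qmu ((xa 0 : QuaternionGroup n) ^ m) = (m : ZMod 4) := by
  induction m with
  | zero => simpa using qmu_one
  | succ k ih =>
    rw [pow_succ, qmu_mul hodd, ih, qmu_b]
    push_cast; ring

lemma apow (i : ZMod (2*n)) (k : ℕ) :
    (a i : QuaternionGroup n) ^ k = a ((k : ZMod (2*n)) * i) := by
  induction k with
  | zero => simp
  | succ m ih =>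
    rw [pow_succ, ih, a_mul_a]
    push_cast; ring_nf

-- decidable facts for n = 3, 5
lemma D1 (hn : n = 3 ∨ n = 5) : (n : ZMod (2*n)) ≠ 0 := by
  rcases hn with rfl | rfl <;> decide

lemma D6 (hn : n = 3 ∨ n = 5) : (n : ZMod 2) = 1 := by
  rcases hn with rfl | rfl <;> decide

lemma D2 (hn : n = 3 ∨ n = 5) (i : ZMod (2*n)) (hi : prj n i = 1) :
    ∃ k : Fin (2*n), ((k.val : ℕ) : ZMod (2*n)) * i = (n : ZMod (2*n)) := by
  rcases hn with rfl | rfl <;> revert i hi <;> decide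

lemma D3 (hn : n = 3 ∨ n = 5) :
    Nat.card {g : QuaternionGroup n // qmu g = 0} = n := by
  rcases hn with rfl | rfl <;> rw [Nat.card_eq_fintype_card] <;> decide

lemma D5 (Q : ZMod 4 → Bool) : ∃ d : ZMod 4, ∀ t, Q t = Q (-t - d) := by
  revert Q; decide

end DicAux

theorem DicAux.aux (n : ℕ) (hn : n = 3 ∨ n = 5) (V : Type*) [Fintype V]
    (hV : Nat.card V ≤ 4 * n + 4) (Γ : SimpleGraph V)
    (e : QuaternionGroup n ≃* (Γ ≃g Γ)) (v : V)
    (hcard : Nat.card (autOrbit e v) = 4 * n) : False := by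
  classical
  open QuaternionGroup DicAux in
  haveI : NeZero n := ⟨by rcases hn with rfl | rfl <;> norm_num⟩
  set f : QuaternionGroup n → V := fun g => e g v with hf
  have hgen : ∀ (g h : QuaternionGroup n) (x : V), e (g * h) x = e g (e h x) := by
    intro g h x; rw [map_mul]; rfl
  have hone : ∀ x : V, e 1 x = x := by intro x; rw [map_one]; rfl
  have hmulf : ∀ g h : QuaternionGroup n, e g (f h) = f (g * h) :=
    fun g h => (hgen g h v).symm
  have hadj : ∀ (g : QuaternionGroup n) (x y : V),
      Γ.Adj (e g x) (e g y) ↔ Γ.Adj x y := fun g x y => (e g).map_adj_iff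
  have hf1 : f 1 = v := hone v
  -- injectivity of f
  have horb : autOrbit e v = Set.range f := rfl
  have hcard' : Nat.card (Set.range f) = 4 * n := by rw [← horb]; exact hcard
  have finj : Function.Injective f := by
    have hsur : Function.Surjective (Set.rangeFactorization f) := Set.rangeFactorization_surjective
    have hcards : Fintype.card (QuaternionGroup n) = Fintype.card (Set.range f) := by
      rw [QuaternionGroup.card, ← Nat.card_eq_fintype_card, hcard']
    have hbij := (Fintype.bijective_iff_surjective_and_card _).2 ⟨hsur, hcards⟩
    intro x y hxy
    exact hbij.injective (Subtype.ext hxy)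
  -- complement size
  have hVcard : Fintype.card V ≤ 4 * n + 4 := by rwa [← Nat.card_eq_fintype_card]
  have hOcard : (Set.range f).toFinset.card = 4 * n := by
    rw [Set.toFinset_card, ← Nat.card_eq_fintype_card, hcard']
  have hRcard : ((Set.range f)ᶜ.toFinset).card ≤ 4 := by
    rw [Set.toFinset_compl, Finset.card_compl, hOcard]
    omega
  -- invariance of the complement
  have hRinv : ∀ (g : QuaternionGroup n) (x : V), x ∉ Set.range f → e g x ∉ Set.range f := by
    intro g x hx hmem
    obtain ⟨h, hh⟩ := hmem
    apply hx
    refine ⟨g⁻¹ * h, ?_⟩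
    calc f (g⁻¹ * h) = e g⁻¹ (f h) := (hmulf _ _).symm
      _ = e g⁻¹ (e g x) := by rw [hh]
      _ = x := by rw [← hgen, inv_mul_cancel, hone]
  -- adjacency within the orbit
  have hkey : ∀ g h : QuaternionGroup n, Γ.Adj (f g) (f h) ↔ Γ.Adj v (f (g⁻¹ * h)) := by
    intro g h
    have h1 : e g⁻¹ (f g) = v := by rw [hmulf, inv_mul_cancel]; exact hf1
    have h2 : e g⁻¹ (f h) = f (g⁻¹ * h) := hmulf _ _
    rw [← hadj g⁻¹ (f g) (f h), h1, h2]
  have hkeyinv : ∀ k : QuaternionGroup n, Γ.Adj v (f k) ↔ Γ.Adj v (f k⁻¹) := by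
    intro k
    have h1 : e k⁻¹ v = f k⁻¹ := rfl
    have h2 : e k⁻¹ (f k) = v := by rw [hmulf, inv_mul_cancel]; exact hf1
    rw [← hadj k⁻¹ v (f k), h1, h2, Γ.adj_comm]
  have hOO : ∀ g h : QuaternionGroup n,
      Γ.Adj (f (qsig g)) (f (qsig h)) ↔ Γ.Adj (f g) (f h) := by
    intro g h
    rw [hkey, hkey g h]
    rcases watkins g h with hw | hw
    · rw [hw]
    · rw [hw, ← hkeyinv]
  -- the shared endgame
  have hend : ∀ φ : V → V, Function.Involutive φ →
      (∀ x y, Γ.Adj (φ x) (φ y) ↔ Γ.Adj x y) →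
      (∀ g, φ (f g) = f (qsig g)) → False := by
    intro φ hinv hmap hφf
    set Φ : Γ ≃g Γ := ⟨Function.Involutive.toPerm φ hinv, @fun x y => hmap x y⟩ with hΦdef
    have hΦ : ∀ x, Φ x = φ x := fun _ => rfl
    set g0 := e.symm Φ with hg0def
    have hg0 : e g0 = Φ := e.apply_symm_apply Φ
    have hv : f g0 = v := by
      show e g0 v = v
      rw [hg0]
      calc Φ v = φ v := hΦ v
        _ = φ (f 1) := by rw [hf1]
        _ = f (qsig 1) := hφf 1
        _ = v := by rw [qsig_one, hf1]
    have hg01 : g0 = 1 := finj (by rw [hv, hf1])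
    have hΦid : Φ = 1 := by rw [← hg0, hg01, map_one]
    have hb1 : φ (f (QuaternionGroup.xa 0)) = f (QuaternionGroup.xa 0) := by
      rw [← hΦ, hΦid]; rfl
    rw [hφf] at hb1
    have hxa : qsig (QuaternionGroup.xa 0 : QuaternionGroup n) = QuaternionGroup.xa 0 :=
      finj hb1
    rw [qsig_xa] at hxa
    have : ((n : ZMod (2*n)) + 0) = 0 := by injection hxa
    exact D1 hn (by rwa [add_zero] at this)
  by_cases hz : ∀ x : V, x ∉ Set.range f → e (QuaternionGroup.a (n : ZMod (2*n))) x = x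
  · -- Case 1: the central involution fixes everything outside the orbit
    set φ : V → V := fun x => if h : ∃ g, f g = x then f (qsig h.choose) else x with hφ
    have hφf : ∀ g, φ (f g) = f (qsig g) := by
      intro g
      have hm : ∃ g0, f g0 = f g := ⟨g, rfl⟩
      simp only [hφ, dif_pos hm]
      rw [finj hm.choose_spec]
    have hφr : ∀ x, x ∉ Set.range f → φ x = x := by
      intro x hx
      have hm : ¬ ∃ g, f g = x := by
        rintro ⟨g, rfl⟩; exact hx ⟨g, rfl⟩
      simp only [hφ, dif_neg hm]
    have hOR : ∀ (g : QuaternionGroup n) (y : V), y ∉ Set.range f →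
        (Γ.Adj (f (qsig g)) y ↔ Γ.Adj (f g) y) := by
      intro g y hy
      rcases qsig_cases g with hc | hc
      · rw [hc]
      · rw [hc, ← hmulf]
        have h2 := hadj (QuaternionGroup.a (n : ZMod (2*n))) (f g) y
        rwa [hz y hy] at h2
    have hinv : Function.Involutive φ := by
      intro x
      by_cases hx : x ∈ Set.range f
      · obtain ⟨g, rfl⟩ := hx
        rw [hφf, hφf, qsig_invol]
      · rw [hφr x hx, hφr x hx]
    have hmap : ∀ x y, Γ.Adj (φ x) (φ y) ↔ Γ.Adj x y := by
      intro x y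
      by_cases hx : x ∈ Set.range f <;> by_cases hy : y ∈ Set.range f
      · obtain ⟨g, rfl⟩ := hx; obtain ⟨h, rfl⟩ := hy
        rw [hφf, hφf]; exact hOO g h
      · obtain ⟨g, rfl⟩ := hx
        rw [hφf, hφr y hy]; exact hOR g y hy
      · obtain ⟨h, rfl⟩ := hy
        rw [hφf, hφr x hx, Γ.adj_comm, Γ.adj_comm x (f h)]
        exact hOR h x hx
      · rw [hφr x hx, hφr y hy]
    exact hend φ hinv hmap hφf
  · -- Case 2
    push_neg at hz
    obtain ⟨r, hrO, hzr⟩ := hz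
    set b : QuaternionGroup n := QuaternionGroup.xa 0 with hbdef
    have hodd := D6 hn
    have hsqr : ∀ g : QuaternionGroup n, e g r = r → e (g * g) r = r := by
      intro g hg; rw [hgen, hg, hg]
    have hpowfix : ∀ g : QuaternionGroup n, e g r = r → ∀ k : ℕ, e (g ^ k) r = r := by
      intro g hg k
      induction k with
      | zero => rw [pow_zero]; exact hone r
      | succ m ih => rw [pow_succ, hgen, hg]; exact ih
    have hb4 : b ^ 4 = 1 := QuaternionGroup.xa_pow_four 0
    have hbmod : ∀ m : ℕ, b ^ m = b ^ (m % 4) := by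
      intro m
      conv_lhs => rw [← Nat.div_add_mod m 4]
      rw [pow_add, pow_mul, hb4, one_pow, one_mul]
    have hb2 : b ^ 2 = QuaternionGroup.a (n : ZMod (2*n)) := QuaternionGroup.xa_sq 0
    have hbb : b * b = QuaternionGroup.a (n : ZMod (2*n)) := by rw [← pow_two]; exact hb2
    have hfix0 : ∀ m : ℕ, e (b ^ m) r = r → m % 4 = 0 := by
      intro m hm
      rw [hbmod] at hm
      have h4 : m % 4 = 0 ∨ m % 4 = 1 ∨ m % 4 = 2 ∨ m % 4 = 3 := by omega
      rcases h4 with h | h | h | h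
      · exact h
      · exfalso
        rw [h, pow_one] at hm
        have h5 := hsqr b hm
        rw [hbb] at h5
        exact hzr h5
      · exfalso
        rw [h, hb2] at hm
        exact hzr hm
      · exfalso
        rw [h] at hm
        have h5 := hsqr _ hm
        have h6 : b ^ 3 * b ^ 3 = QuaternionGroup.a (n : ZMod (2*n)) := by
          rw [← pow_add]
          rw [hbmod 6]
          norm_num
          exact hb2
        rw [h6] at h5
        exact hzr h5
    set ρ : ZMod 4 → V := fun c => e (b ^ c.val) r with hρdef
    have hρ0 : ρ 0 = r := by
      simp only [hρdef, ZMod.val_zero, pow_zero]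
      exact hone r
    have hρinj : Function.Injective ρ := by
      have haux : ∀ c c' : ZMod 4, c.val ≤ c'.val → ρ c = ρ c' → c = c' := by
        intro c c' hle hcc
        simp only [hρdef] at hcc
        have h2 : (b ^ c.val) * b ^ (c'.val - c.val) = b ^ c'.val := by
          rw [← pow_add]; congr 1; omega
        have h4 : e ((b ^ c.val)⁻¹ * b ^ c'.val) r = r := by
          rw [hgen, ← hcc, ← hgen, inv_mul_cancel, hone]
        have h5 : b ^ (c'.val - c.val) = (b ^ c.val)⁻¹ * b ^ c'.val :=
          eq_inv_mul_iff_mul_eq.mpr h2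
        rw [← h5] at h4
        have h6 := hfix0 _ h4
        have hc1 : c.val < 4 := ZMod.val_lt c
        have hc2 : c'.val < 4 := ZMod.val_lt c'
        exact ZMod.val_injective 4 (by omega)
      intro c c' hcc
      rcases le_total c.val c'.val with h | h
      · exact haux _ _ h hcc
      · exact (haux _ _ h hcc.symm).symm
    have hρR : ∀ c, ρ c ∉ Set.range f := fun c => hRinv _ _ hrO
    -- the complement is exactly the image of ρ
    have hcover : ∀ x : V, x ∉ Set.range f → ∃ c, ρ c = x := by
      intro x hx
      have hsub : Finset.univ.image ρ ⊆ (Set.range f)ᶜ.toFinset := by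
        intro y hy
        simp only [Finset.mem_image] at hy
        obtain ⟨c, _, rfl⟩ := hy
        rw [Set.mem_toFinset]
        exact hρR c
      have hc4 : (Finset.univ.image ρ).card = 4 := by
        rw [Finset.card_image_of_injective _ hρinj, Finset.card_univ, ZMod.card]
      have heq : Finset.univ.image ρ = (Set.range f)ᶜ.toFinset :=
        Finset.eq_of_subset_of_card_le hsub (by omega)
      have hx2 : x ∈ (Set.range f)ᶜ.toFinset := by rw [Set.mem_toFinset]; exact hx
      rw [← heq] at hx2
      simp only [Finset.mem_image] at hx2
      obtain ⟨c, _, hc⟩ := hx2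
      exact ⟨c, hc⟩
    -- translation action on ρ
    have hvadd : ∀ (k : ℕ) (c : ZMod 4), (c + (k : ZMod 4)).val = (k + c.val) % 4 := by
      intro k c
      rw [ZMod.val_add, ZMod.val_natCast]
      omega
    have heρ : ∀ (k : ℕ) (c : ZMod 4), e (b ^ k) (ρ c) = ρ (c + (k : ZMod 4)) := by
      intro k c
      simp only [hρdef]
      rw [← hgen, ← pow_add, hbmod (k + c.val), hvadd]
    -- stabilizer: forward inclusion
    have hstab_fwd : ∀ g : QuaternionGroup n, e g r = r → qmu g = 0 := by
      intro g hg
      rcases g with i | i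
      · by_contra hne
        have h01 : prj n i = 0 ∨ prj n i = 1 := by
          generalize prj n i = s; revert s; decide
        have h1 : prj n i = 1 := by
          rcases h01 with h | h
          · exfalso; apply hne; simp [qmu, h]
          · exact h
        obtain ⟨k, hk⟩ := D2 hn i h1
        have h2 := hpowfix _ hg k.val
        rw [apow, hk] at h2
        exact hzr h2
      · exfalso
        have h2 := hsqr _ hg
        rw [QuaternionGroup.xa_mul_xa] at h2
        have h3 : ((n : ZMod (2*n)) + i - i) = (n : ZMod (2*n)) := by ring
        rw [h3] at h2
        exact hzr h2
    -- stabilizer: counting and converse inclusion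
    have hstab : ∀ g : QuaternionGroup n, qmu g = 0 → e g r = r := by
      set St : Finset (QuaternionGroup n) := Finset.univ.filter (fun g => e g r = r) with hSt
      set Ef : Finset (QuaternionGroup n) := Finset.univ.filter (fun g => qmu g = 0) with hEf
      have hStE : St ⊆ Ef := by
        intro g hg
        rw [hSt, Finset.mem_filter] at hg
        rw [hEf, Finset.mem_filter]
        exact ⟨Finset.mem_univ g, hstab_fwd g hg.2⟩
      have hEcard : Ef.card = n := by
        have hD := D3 hn
        rwa [Nat.card_eq_fintype_card, Fintype.card_subtype] at hD
      have hν : ∀ g : QuaternionGroup n, ∃ c, ρ c = e g r :=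
        fun g => hcover _ (hRinv g r hrO)
      have hνiff : ∀ (g : QuaternionGroup n) (c : ZMod 4),
          (hν g).choose = c ↔ e g r = ρ c := by
        intro g c
        constructor
        · intro h; rw [← (hν g).choose_spec, h]
        · intro h; exact hρinj (by rw [(hν g).choose_spec, h])
      have hpart : Fintype.card (QuaternionGroup n)
          = ∑ c : ZMod 4, (Finset.univ.filter fun g => (hν g).choose = c).card := by
        rw [← Finset.card_univ]
        exact Finset.card_eq_sum_card_fiberwise (fun g _ => Finset.mem_univ _)
      have hρc : ∀ c : ZMod 4, e (b ^ c.val) r = ρ c := fun c => rfl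
      have hfib : ∀ c : ZMod 4,
          (Finset.univ.filter fun g => (hν g).choose = c).card = St.card := by
        intro c
        apply Finset.card_bij (fun g _ => (b ^ c.val)⁻¹ * g)
        · intro g hg
          rw [Finset.mem_filter] at hg
          have hg2 := (hνiff g c).mp hg.2
          rw [hSt, Finset.mem_filter]
          refine ⟨Finset.mem_univ _, ?_⟩
          rw [hgen, hg2, ← hρc, ← hgen, inv_mul_cancel, hone]
        · intro g1 h1 g2 h2 heq
          exact mul_left_cancel heq
        · intro g hg
          rw [hSt, Finset.mem_filter] at hg
          refine ⟨b ^ c.val * g, ?_, ?_⟩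
          · rw [Finset.mem_filter]
            refine ⟨Finset.mem_univ _, ?_⟩
            rw [hνiff, hgen, hg.2, hρc]
          · rw [inv_mul_cancel_left]
      have hSt4 : 4 * St.card = 4 * n := by
        have h1 : Fintype.card (QuaternionGroup n) = 4 * n := QuaternionGroup.card
        have h2 : ∑ c : ZMod 4, (Finset.univ.filter fun g => (hν g).choose = c).card
            = ∑ _c : ZMod 4, St.card := Finset.sum_congr rfl (fun c _ => hfib c)
        rw [Finset.sum_const, Finset.card_univ, ZMod.card, smul_eq_mul] at h2
        omega
      have hStcard : St.card = n := by omega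
      have hStEf : St = Ef :=
        Finset.eq_of_subset_of_card_le hStE (by rw [hEcard, hStcard])
      intro g hg
      have hgE : g ∈ Ef := by
        rw [hEf, Finset.mem_filter]; exact ⟨Finset.mem_univ _, hg⟩
      rw [← hStEf, hSt, Finset.mem_filter] at hgE
      exact hgE.2
    -- qmu of inverses
    have hmuinv : ∀ g : QuaternionGroup n, qmu g⁻¹ = - qmu g := by
      intro g
      have h1 : qmu (g * g⁻¹) = qmu g + qmu g⁻¹ := qmu_mul hodd _ _
      rw [mul_inv_cancel, qmu_one] at h1
      linear_combination -h1
    have hnatval : ∀ c : ZMod 4, ((c.val : ℕ) : ZMod 4) = c := by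
      intro c; rw [ZMod.natCast_val, ZMod.cast_id]
    -- the key reduction for orbit-complement edges
    have hC : ∀ h : QuaternionGroup n,
        Γ.Adj (f h) r ↔ Γ.Adj (f (b ^ (qmu h).val)) r := by
      intro h
      have hsmu : qmu ((b ^ (qmu h).val)⁻¹ * h) = 0 := by
        rw [qmu_mul hodd, hmuinv, qmu_pow hodd, hnatval]
        ring
      set s : QuaternionGroup n := (b ^ (qmu h).val)⁻¹ * h with hs
      set s' : QuaternionGroup n := b ^ (qmu h).val * s * (b ^ (qmu h).val)⁻¹ with hs'
      have hs'mu : qmu s' = 0 := by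
        rw [hs', qmu_mul hodd, qmu_mul hodd, hsmu, hmuinv]
        ring
      have hs'fix : e s' r = r := hstab s' hs'mu
      have hdecomp : s' * b ^ (qmu h).val = h := by
        rw [hs', hs]; group
      have h1 := hadj s' (f (b ^ (qmu h).val)) r
      rw [hmulf, hs'fix, hdecomp] at h1
      exact h1
    have key2 : ∀ (g : QuaternionGroup n) (c : ZMod 4),
        Γ.Adj (f g) (ρ c) ↔ Γ.Adj (f (b ^ (qmu g - c).val)) r := by
      intro g c
      have hB : Γ.Adj (f g) (ρ c) ↔ Γ.Adj (f ((b ^ (-c).val) * g)) r := by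
        have h1 := hadj (b ^ ((-c).val)) (f g) (ρ c)
        rw [hmulf, heρ] at h1
        have h2 : c + (((-c).val : ℕ) : ZMod 4) = 0 := by
          rw [hnatval]; ring
        rw [h2, hρ0] at h1
        exact h1.symm
      rw [hB, hC]
      have h3 : qmu ((b ^ (-c).val) * g) = qmu g - c := by
        rw [qmu_mul hodd, qmu_pow hodd, hnatval]; ring
      rw [h3]
    -- choose the reflection parameter d
    obtain ⟨d, hd⟩ := D5 (fun t => @decide (Γ.Adj (f (b ^ t.val)) r) (Classical.propDecidable _))
    have hdp : ∀ t : ZMod 4, Γ.Adj (f (b ^ t.val)) r ↔ Γ.Adj (f (b ^ (-t - d).val)) r := by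
      intro t
      have h1 := hd t
      rwa [decide_eq_decide] at h1
    -- translation invariance of edges inside the complement
    have hρtrans : ∀ (k c c' : ZMod 4),
        Γ.Adj (ρ (c + k)) (ρ (c' + k)) ↔ Γ.Adj (ρ c) (ρ c') := by
      intro k c c'
      have h1 := hadj (b ^ k.val) (ρ c) (ρ c')
      rw [heρ, heρ, hnatval] at h1
      exact h1
    have hRR0 : ∀ u : ZMod 4, Γ.Adj (ρ u) (ρ 0) ↔ Γ.Adj (ρ (-u)) (ρ 0) := by
      intro u
      rw [Γ.adj_comm (ρ u) (ρ 0)]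
      have h1 := hρtrans (-u) 0 u
      rw [show (0 : ZMod 4) + -u = -u from by ring, show u + -u = (0 : ZMod 4) from by ring] at h1
      exact h1.symm
    -- define φ
    set φ : V → V := fun x =>
      if h : ∃ g, f g = x then f (qsig h.choose)
      else if h2 : ∃ c, ρ c = x then ρ (d - h2.choose) else x with hφ
    have hφf : ∀ g, φ (f g) = f (qsig g) := by
      intro g
      have hm : ∃ g0, f g0 = f g := ⟨g, rfl⟩
      simp only [hφ, dif_pos hm]
      rw [finj hm.choose_spec]
    have hφρ : ∀ c, φ (ρ c) = ρ (d - c) := by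
      intro c
      have hm : ¬ ∃ g, f g = ρ c := by
        rintro ⟨g, hg⟩; exact hρR c ⟨g, hg⟩
      have hm2 : ∃ c', ρ c' = ρ c := ⟨c, rfl⟩
      simp only [hφ, dif_neg hm, dif_pos hm2]
      rw [hρinj hm2.choose_spec]
    have hmem2 : ∀ x : V, (∃ g, f g = x) ∨ (∃ c, ρ c = x) := by
      intro x
      by_cases hx : x ∈ Set.range f
      · left; exact hx
      · right; exact hcover x hx
    have hinv : Function.Involutive φ := by
      intro x
      rcases hmem2 x with ⟨g, rfl⟩ | ⟨c, rfl⟩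
      · rw [hφf, hφf, qsig_invol]
      · rw [hφρ, hφρ, sub_sub_cancel]
    have hOR : ∀ (g : QuaternionGroup n) (c : ZMod 4),
        (Γ.Adj (f (qsig g)) (ρ (d - c)) ↔ Γ.Adj (f g) (ρ c)) := by
      intro g c
      rw [key2, key2, qmu_sig hodd]
      rw [show -qmu g - (d - c) = -(qmu g - c) - d from by ring]
      exact (hdp (qmu g - c)).symm
    have hmap : ∀ x y, Γ.Adj (φ x) (φ y) ↔ Γ.Adj x y := by
      intro x y
      rcases hmem2 x with ⟨g, rfl⟩ | ⟨c, rfl⟩ <;> rcases hmem2 y with ⟨h, rfl⟩ | ⟨c', rfl⟩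
      · rw [hφf, hφf]; exact hOO g h
      · rw [hφf, hφρ]; exact hOR g c'
      · rw [hφρ, hφf]
        rw [Γ.adj_comm (ρ (d - c)) (f (qsig h)), Γ.adj_comm (ρ c) (f h)]
        exact hOR h c
      · rw [hφρ, hφρ]
        calc Γ.Adj (ρ (d - c)) (ρ (d - c'))
            ↔ Γ.Adj (ρ ((c' - c) + (d - c'))) (ρ (0 + (d - c'))) := by
              rw [show (c' - c) + (d - c') = d - c from by ring,
                show (0 : ZMod 4) + (d - c') = d - c' from by ring]
          _ ↔ Γ.Adj (ρ (c' - c)) (ρ 0) := hρtrans _ _ _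
          _ ↔ Γ.Adj (ρ (c - c')) (ρ 0) := by
              have h1 := hRR0 (c' - c)
              rwa [show -(c' - c) = c - c' from by ring] at h1
          _ ↔ Γ.Adj (ρ (c + (-c'))) (ρ (c' + (-c'))) := by
              rw [show c + (-c') = c - c' from by ring,
                show c' + (-c') = (0 : ZMod 4) from by ring]
          _ ↔ Γ.Adj (ρ c) (ρ c') := hρtrans _ _ _
    exact hend φ hinv hmap hφf

/-- Lemma: for `q ∈ {3, 5}`, if `G = Dic_q` (realised as `QuaternionGroup q`)
acts on the vertices of a graph `Γ` with at most `4q + 4` vertices via an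
isomorphism `G ≃* Aut(Γ)`, then no orbit has size `4q = |G|`. -/
theorem dicyclic_no_regular_orbit (q : ℕ) (hq : q = 3 ∨ q = 5)
    (V : Type*) [Fintype V] (hV : Nat.card V ≤ 4 * q + 4)
    (Γ : SimpleGraph V) (e : QuaternionGroup q ≃* (Γ ≃g Γ)) :
    ∀ v : V, Nat.card (autOrbit e v) ≠ 4 * q := by
  intro v hv
  exact DicAux.aux q hq V hV Γ e v hv
end
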